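/- arXiv:0805.4370 — 2 statements merged into one kernel-verified Lean document; each statement's English description precedes it below -/
import Mathlib

section
/- For every polynomial φ and every contraction T (an operator of norm at most 1) on a complex Hilbert space, ‖φ(T)‖ ≤ max_{|ζ|≤1} |φ(ζ)| (von Neumann's inequality). -/
open MeasureTheory Filter Topology Metric Polynomial ContinuousLinearMap
open scoped ENNReal NNReal

noncomputable section

/-- `A = φ(T)` in the sense of the von Neumann functional calculus for contractions:
`A` is the operator-norm limit of `pₙ(T)` whenever polynomials `pₙ` converge to `φ`
uniformly on the closed unit disk. -/
def IsCalc {H : Type*} [NormedAddCommGroup H] [NormedSpace ℂ H]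
    (T : H →L[ℂ] H) (φ : ℂ → ℂ) (A : H →L[ℂ] H) : Prop :=
  ∀ p : ℕ → Polynomial ℂ,
    TendstoUniformlyOn (fun n z => (p n).eval z) φ atTop (closedBall 0 1) →
    Tendsto (fun n => Polynomial.aeval T (p n)) atTop (𝓝 A)

/-- membership in the disk algebra `C_A` -/
def MemDiskAlgebra (φ : ℂ → ℂ) : Prop :=
  ContinuousOn φ (closedBall 0 1) ∧ DifferentiableOn ℂ φ (ball 0 1)

/-- `A = ∫ f dE` : `A` is the operator-norm limit of the integrals of simple functions
converging uniformly to `f`. -/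
def IsOpIntegral {X : Type*} [MeasurableSpace X] {H : Type*}
    [NormedAddCommGroup H] [NormedSpace ℂ H]
    (E : Set X → H →L[ℂ] H) (f : X → ℂ) (A : H →L[ℂ] H) : Prop :=
  ∀ s : ℕ → SimpleFunc X ℂ,
    TendstoUniformly (fun n x => s n x) f atTop →
    Tendsto (fun n => ∑ z ∈ (s n).range, z • E ((s n : X → ℂ) ⁻¹' {z})) atTop (𝓝 A)

/-- semi-spectral measure: positive operator valued, normalized,
countably additive in the weak operator topology -/
def IsSemiSpectralMeasure {X : Type*} [MeasurableSpace X] {H : Type*}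
    [NormedAddCommGroup H] [InnerProductSpace ℂ H] [CompleteSpace H]
    (ℰ : Set X → H →L[ℂ] H) : Prop :=
  (∀ Δ : Set X, MeasurableSet Δ → (ℰ Δ).IsPositive) ∧
  ℰ ∅ = 0 ∧
  ℰ Set.univ = 1 ∧
  ∀ Δ : ℕ → Set X, (∀ j, MeasurableSet (Δ j)) → Pairwise (Function.onFun Disjoint Δ) →
    ∀ x y : H, Tendsto (fun N => ∑ j ∈ Finset.range N, (inner ℂ (ℰ (Δ j) x) y : ℂ))
      atTop (𝓝 (inner ℂ (ℰ (⋃ j, Δ j) x) y))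

/-- spectral measure: projection valued, multiplicative, normalized,
countably additive in the strong operator topology -/
def IsSpectralMeasure {X : Type*} [MeasurableSpace X] {K : Type*}
    [NormedAddCommGroup K] [InnerProductSpace ℂ K] [CompleteSpace K]
    (E : Set X → K →L[ℂ] K) : Prop :=
  (∀ Δ : Set X, MeasurableSet Δ → IsSelfAdjoint (E Δ)) ∧
  (∀ Δ₁ Δ₂ : Set X, MeasurableSet Δ₁ → MeasurableSet Δ₂ →
    E (Δ₁ ∩ Δ₂) = E Δ₁ ∘L E Δ₂) ∧
  E ∅ = 0 ∧
  E Set.univ = 1 ∧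
  ∀ Δ : ℕ → Set X, (∀ j, MeasurableSet (Δ j)) → Pairwise (Function.onFun Disjoint Δ) →
    ∀ x : K, Tendsto (fun N => ∑ j ∈ Finset.range N, E (Δ j) x)
      atTop (𝓝 (E (⋃ j, Δ j) x))

/-- square of the Hilbert–Schmidt norm of `Q`, computed with the Hilbert basis `e` -/
def hsNorm2 {ι : Type*} {H₁ H₂ : Type*}
    [NormedAddCommGroup H₁] [InnerProductSpace ℂ H₁]
    [NormedAddCommGroup H₂] [InnerProductSpace ℂ H₂] [CompleteSpace H₂]
    (e : HilbertBasis ι ℂ H₂) (Q : H₂ →L[ℂ] H₁) : ℝ≥0∞ :=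
  ∑' i, (‖Q (e i)‖₊ : ℝ≥0∞) ^ 2

/-- Hilbert–Schmidt inner product of `Q` and `R`, computed with the Hilbert basis `e` -/
def hsInner {ι : Type*} {H₁ H₂ : Type*}
    [NormedAddCommGroup H₁] [InnerProductSpace ℂ H₁]
    [NormedAddCommGroup H₂] [InnerProductSpace ℂ H₂] [CompleteSpace H₂]
    (e : HilbertBasis ι ℂ H₂) (Q R : H₂ →L[ℂ] H₁) : ℂ :=
  ∑' i, (inner ℂ (Q (e i)) (R (e i)) : ℂ)

/-- `F` is a semi-spectral measure on the product σ-algebra, acting on the Hilbert space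
`S₂(H₂,H₁)` of Hilbert–Schmidt operators, which extends
`F(Δ₁×Δ₂)Q = ℰ₁(Δ₁) Q ℰ₂(Δ₂)`. -/
def IsProductSSM {ι X₁ X₂ : Type*} [MeasurableSpace X₁] [MeasurableSpace X₂]
    {H₁ H₂ : Type*}
    [NormedAddCommGroup H₁] [InnerProductSpace ℂ H₁] [CompleteSpace H₁]
    [NormedAddCommGroup H₂] [InnerProductSpace ℂ H₂] [CompleteSpace H₂]
    (e : HilbertBasis ι ℂ H₂)
    (ℰ₁ : Set X₁ → H₁ →L[ℂ] H₁) (ℰ₂ : Set X₂ → H₂ →L[ℂ] H₂)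
    (F : Set (X₁ × X₂) → (H₂ →L[ℂ] H₁) → (H₂ →L[ℂ] H₁)) : Prop :=
  (∀ Ω, MeasurableSet Ω → IsLinearMap ℂ (F Ω)) ∧
  -- boundedness on S₂ (indeed `0 ≤ F(Ω) ≤ I`)
  (∀ Ω, MeasurableSet Ω → ∀ Q, hsNorm2 e Q ≠ ⊤ → hsNorm2 e (F Ω Q) ≤ hsNorm2 e Q) ∧
  -- value on measurable rectangles
  (∀ Δ₁ Δ₂, MeasurableSet Δ₁ → MeasurableSet Δ₂ → ∀ Q : H₂ →L[ℂ] H₁, hsNorm2 e Q ≠ ⊤ →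
    F (Δ₁ ×ˢ Δ₂) Q = ℰ₁ Δ₁ ∘L Q ∘L ℰ₂ Δ₂) ∧
  -- positivity
  (∀ Ω, MeasurableSet Ω → ∀ Q, hsNorm2 e Q ≠ ⊤ →
    0 ≤ (hsInner e (F Ω Q) Q).re ∧ (hsInner e (F Ω Q) Q).im = 0) ∧
  (∀ Q, F ∅ Q = 0) ∧
  (∀ Q, hsNorm2 e Q ≠ ⊤ → F Set.univ Q = Q) ∧
  -- weak countable additivity
  (∀ Ω : ℕ → Set (X₁ × X₂), (∀ j, MeasurableSet (Ω j)) →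
    Pairwise (Function.onFun Disjoint Ω) →
    ∀ Q R : H₂ →L[ℂ] H₁, hsNorm2 e Q ≠ ⊤ → hsNorm2 e R ≠ ⊤ →
      Tendsto (fun N => ∑ j ∈ Finset.range N, hsInner e (F (Ω j) Q) R) atTop
        (𝓝 (hsInner e (F (⋃ j, Ω j) Q) R)))

/-- `A = ∬ Φ dℰ₁ Q dℰ₂`, the double operator integral with respect to semi-spectral
measures of a Hilbert–Schmidt operator `Q`: `A` is obtained by applying to `Q` the
integral of `Φ` against a product semi-spectral measure `F` on `S₂(H₂,H₁)`, the integral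
being the `S₂`-limit of integrals of uniformly approximating simple functions. -/
def IsDOI {ι X₁ X₂ : Type*} [MeasurableSpace X₁] [MeasurableSpace X₂]
    {H₁ H₂ : Type*}
    [NormedAddCommGroup H₁] [InnerProductSpace ℂ H₁] [CompleteSpace H₁]
    [NormedAddCommGroup H₂] [InnerProductSpace ℂ H₂] [CompleteSpace H₂]
    (e : HilbertBasis ι ℂ H₂)
    (ℰ₁ : Set X₁ → H₁ →L[ℂ] H₁) (ℰ₂ : Set X₂ → H₂ →L[ℂ] H₂)
    (Φ : X₁ × X₂ → ℂ) (Q A : H₂ →L[ℂ] H₁) : Prop :=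
  ∃ F, IsProductSSM e ℰ₁ ℰ₂ F ∧
    ∀ s : ℕ → SimpleFunc (X₁ × X₂) ℂ,
      TendstoUniformly (fun n p => s n p) Φ atTop →
      Tendsto
        (fun n => hsNorm2 e
          ((∑ z ∈ (s n).range, z • F ((s n : X₁ × X₂ → ℂ) ⁻¹' {z}) Q) - A))
        atTop (𝓝 0)

/-- `ℰ` is a semi-spectral measure of the contraction `T` on the unit circle:
`Tⁿ = ∫ ζⁿ dℰ(ζ)` for all `n ≥ 0`. -/
def IsSemiSpectralMeasureOf {H : Type*}
    [NormedAddCommGroup H] [InnerProductSpace ℂ H] [CompleteSpace H]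
    (T : H →L[ℂ] H) (ℰ : Set (sphere (0:ℂ) 1) → H →L[ℂ] H) : Prop :=
  IsSemiSpectralMeasure ℰ ∧ ∀ n : ℕ, IsOpIntegral ℰ (fun ζ => (ζ : ℂ) ^ n) (T ^ n)

/-- alternating chain `A 0 ∘ Q 0 ∘ A 1 ∘ Q 1 ∘ ⋯ ∘ Q (n-1) ∘ A n` for a family of
Hilbert spaces -/
def opChainF (H : ℕ → Type*) [∀ k, NormedAddCommGroup (H k)] [∀ k, NormedSpace ℂ (H k)]
    (A : ∀ k, H k →L[ℂ] H k) (Q : ∀ k, H (k + 1) →L[ℂ] H k) : ∀ n, H n →L[ℂ] H 0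
  | 0 => A 0
  | n + 1 => opChainF H A Q n ∘L Q n ∘L A (n + 1)

/-- alternating chain `A 0 ∘ Q ∘ A 1 ∘ Q ∘ ⋯ ∘ Q ∘ A n` on a single space -/
def opChainC {H : Type*} [NormedAddCommGroup H] [NormedSpace ℂ H]
    (A : ℕ → H →L[ℂ] H) (Q : H →L[ℂ] H) : ℕ → H →L[ℂ] H
  | 0 => A 0
  | n + 1 => opChainC A Q n ∘L Q ∘L A (n + 1)

/-- divided difference of order `n` of `φ`, evaluated at `l 0, …, l n` -/
def divDiff (φ : ℂ → ℂ) : ℕ → (ℕ → ℂ) → ℂ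
  | 0, l => φ (l 0)
  | n + 1, l =>
      (divDiff φ n l - divDiff φ n (fun k => if k = n then l (n + 1) else l k)) /
        (l n - l (n + 1))


section VNProof
open intervalIntegral
open scoped Real ComplexConjugate
set_option linter.unusedSectionVars false

namespace VN
variable {H : Type*} [NormedAddCommGroup H] [InnerProductSpace ℂ H] [CompleteSpace H]

local notation "⟪" x ", " y "⟫" => @inner ℂ _ _ x y

def eC (n : ℤ) (θ : ℝ) : ℂ := Complex.exp (n * θ * Complex.I)

lemma eC_conj (n : ℤ) (θ : ℝ) : conj (eC n θ) = eC (-n) θ := by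
  unfold eC
  rw [← Complex.exp_conj]
  congr 1
  simp [Complex.conj_I]

lemma eC_norm (n : ℤ) (θ : ℝ) : ‖eC n θ‖ = 1 := by
  unfold eC
  rw [show ((n : ℂ) * θ * Complex.I) = ((n * θ : ℝ) : ℂ) * Complex.I by push_cast; ring]
  exact Complex.norm_exp_ofReal_mul_I _

lemma eC_cont (n : ℤ) : Continuous (eC n) := by
  unfold eC; fun_prop

lemma integral_eC (n : ℤ) :
    ∫ θ in (0:ℝ)..(2 * π), eC n θ = if n = 0 then ((2 * π : ℝ) : ℂ) else 0 := by
  rcases eq_or_ne n 0 with h | h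
  · simp [h, eC]
  · have hc : ((n : ℂ) * Complex.I) ≠ 0 := by
      simp [Complex.I_ne_zero, h]
    rw [if_neg h]
    have : ∀ θ : ℝ, eC n θ = Complex.exp ((n * Complex.I) * θ) := by
      intro θ; unfold eC; ring_nf
    simp_rw [this]
    rw [integral_exp_mul_complex hc]
    rw [show ((n:ℂ) * Complex.I) * ((2 * π : ℝ) : ℂ) = n * (2 * π * Complex.I) by
      push_cast; ring]
    simp [Complex.exp_int_mul_two_pi_mul_I]

lemma eC_mul (m n : ℤ) (θ : ℝ) : eC m θ * eC n θ = eC (m + n) θ := by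
  unfold eC; rw [← Complex.exp_add]; push_cast; ring_nf

variable (T : H →L[ℂ] H)

/-- `N T θ = e^{iθ} T`. -/
def NN (θ : ℝ) : H →L[ℂ] H := eC 1 θ • T

lemma NN_norm (θ : ℝ) : ‖NN T θ‖ = ‖T‖ := by
  rw [NN, norm_smul]
  have : ‖eC 1 θ‖ = 1 := by
    unfold eC
    rw [show ((1:ℤ) : ℂ) * θ * Complex.I = ((θ:ℝ):ℂ) * Complex.I by push_cast; ring]
    exact Complex.norm_exp_ofReal_mul_I _
  rw [this, one_mul]

variable (hT : ‖T‖ < 1)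

/-- `1 - e^{iθ}T` as a unit. -/
def UU (θ : ℝ) : (H →L[ℂ] H)ˣ := Units.oneSub (NN T θ) (by rw [NN_norm]; exact hT)

/-- `S T θ = (1 - e^{iθ}T)⁻¹`. -/
def SS (θ : ℝ) : H →L[ℂ] H := ↑(UU T hT θ)⁻¹

lemma SS_eq_tsum (θ : ℝ) : SS T hT θ = ∑' m : ℕ, (NN T θ) ^ m := rfl

lemma SS_eq_inverse (θ : ℝ) : SS T hT θ = Ring.inverse (1 - NN T θ) := by
  rw [show (1 - NN T θ) = ((UU T hT θ : (H →L[ℂ] H)ˣ) : H →L[ℂ] H) from rfl,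
    Ring.inverse_unit]
  rfl

lemma SS_cont : Continuous (fun θ => SS T hT θ) := by
  have h1 : Continuous fun θ => (1 - NN T θ) := by
    unfold NN eC
    fun_prop
  rw [funext (SS_eq_inverse T hT)]
  refine continuous_iff_continuousAt.2 fun θ₀ => ?_
  have h2 : ContinuousAt Ring.inverse ((1 : H →L[ℂ] H) - NN T θ₀) :=
    NormedRing.inverse_continuousAt (UU T hT θ₀)
  exact Filter.Tendsto.comp h2 h1.continuousAt

lemma SS_recon (θ : ℝ) (x : H) : (SS T hT θ) x - (NN T θ) ((SS T hT θ) x) = x := by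
  have : ((1 - NN T θ) * SS T hT θ) x = x := by
    have h := Units.mul_inv (UU T hT θ)
    rw [show ((1 - NN T θ) * SS T hT θ : H →L[ℂ] H)
        = ↑(UU T hT θ) * ↑(UU T hT θ)⁻¹ from rfl, h]
    rfl
  simpa [ContinuousLinearMap.mul_apply, ContinuousLinearMap.sub_apply] using this

/-- the operator Poisson kernel -/
def KK (θ : ℝ) : H →L[ℂ] H := SS T hT θ + ContinuousLinearMap.adjoint (SS T hT θ) - 1

lemma key_form (θ : ℝ) (x y : H) :
    ⟪x, KK T hT θ y⟫ = ⟪SS T hT θ x, SS T hT θ y⟫ - ⟪T (SS T hT θ x), T (SS T hT θ y)⟫ := by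
  set u := SS T hT θ x
  set v := SS T hT θ y
  have hx : x = u - NN T θ u := (SS_recon T hT θ x).symm
  have hy : y = v - NN T θ v := (SS_recon T hT θ y).symm
  have h1 : ⟪x, KK T hT θ y⟫ = ⟪x, v⟫ + ⟪u, y⟫ - ⟪x, y⟫ := by
    rw [KK]
    simp only [ContinuousLinearMap.sub_apply, ContinuousLinearMap.add_apply,
      ContinuousLinearMap.one_apply, inner_sub_right, inner_add_right,
      ContinuousLinearMap.adjoint_inner_right]
    rfl
  have hNc : ∀ a b : H, ⟪NN T θ a, NN T θ b⟫ = ⟪T a, T b⟫ := by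
    intro a b
    rw [NN]
    simp only [ContinuousLinearMap.smul_apply, inner_smul_left, inner_smul_right]
    rw [← mul_assoc, eC_conj, eC_mul]
    simp [eC]
  rw [h1, hx, hy]
  simp only [inner_sub_left, inner_sub_right, hNc]
  ring

lemma pos_form (θ : ℝ) (x : H) :
    ⟪x, KK T hT θ x⟫ = ((‖SS T hT θ x‖ ^ 2 - ‖T (SS T hT θ x)‖ ^ 2 : ℝ) : ℂ) := by
  rw [key_form]
  rw [inner_self_eq_norm_sq_to_K, inner_self_eq_norm_sq_to_K]
  norm_cast


lemma eC_pow (m : ℕ) (θ : ℝ) : eC 1 θ ^ m = eC (m : ℤ) θ := by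
  unfold eC
  rw [← Complex.exp_nat_mul]
  push_cast; ring_nf

lemma pow_apply_norm_le (T : H →L[ℂ] H) (m : ℕ) (y : H) : ‖(T ^ m) y‖ ≤ ‖T‖ ^ m * ‖y‖ := by
  induction m generalizing y with
  | zero => simp
  | succ m ih =>
    rw [pow_succ, ContinuousLinearMap.mul_apply]
    calc ‖(T ^ m) (T y)‖ ≤ ‖T‖ ^ m * ‖T y‖ := ih (T y)
      _ ≤ ‖T‖ ^ m * (‖T‖ * ‖y‖) :=
          mul_le_mul_of_nonneg_left (T.le_opNorm y) (by positivity)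
      _ = ‖T‖ ^ (m + 1) * ‖y‖ := by ring

lemma inner_pow_norm_le (T : H →L[ℂ] H) (m : ℕ) (x y : H) :
    ‖(⟪x, (T ^ m) y⟫ : ℂ)‖ ≤ ‖T‖ ^ m * ‖x‖ * ‖y‖ := by
  calc ‖(⟪x, (T ^ m) y⟫ : ℂ)‖ ≤ ‖x‖ * ‖(T ^ m) y‖ := norm_inner_le_norm _ _
    _ ≤ ‖x‖ * (‖T‖ ^ m * ‖y‖) := by
        gcongr
        exact pow_apply_norm_le T m y
    _ = ‖T‖ ^ m * ‖x‖ * ‖y‖ := by ring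

lemma summable_aux (T : H →L[ℂ] H) (hT : ‖T‖ < 1) (x y : H) (f : ℕ → ℝ → ℂ)
    (hf : ∀ m θ, ‖f m θ‖ ≤ ‖T‖ ^ m * ‖x‖ * ‖y‖) (θ : ℝ) :
    Summable (fun m : ℕ => f m θ) := by
  apply Summable.of_norm
  refine Summable.of_nonneg_of_le (fun m => norm_nonneg _) (fun m => hf m θ) ?_
  have : Summable (fun m : ℕ => ‖T‖ ^ m) :=
    summable_geometric_of_lt_one (norm_nonneg T) hT
  simpa [mul_assoc] using this.mul_right (‖x‖ * ‖y‖)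

lemma norm_eC_inner_le (T : H →L[ℂ] H) (n : ℤ) (m : ℕ) (θ : ℝ) (x y : H) :
    ‖eC n θ * ⟪x, (T ^ m) y⟫‖ ≤ ‖T‖ ^ m * ‖x‖ * ‖y‖ := by
  rw [norm_mul, eC_norm, one_mul]
  exact inner_pow_norm_le T m x y

lemma inner_SS_right (θ : ℝ) (x y : H) :
    ⟪x, SS T hT θ y⟫ = ∑' m : ℕ, eC m θ * ⟪x, (T ^ m) y⟫ := by
  have hsum : Summable (fun m : ℕ => (NN T θ) ^ m) :=
    summable_geometric_of_norm_lt_one (by rw [NN_norm]; exact hT)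
  have h1 := ((innerSL ℂ x).comp (ContinuousLinearMap.apply ℂ H y)).map_tsum hsum
  have h2 : (⟪x, (∑' (m : ℕ), NN T θ ^ m) y⟫ : ℂ) = ∑' m : ℕ, ⟪x, ((NN T θ) ^ m) y⟫ := by
    simpa using h1
  rw [SS_eq_tsum, h2]
  refine tsum_congr fun m => ?_
  rw [NN, _root_.smul_pow, ContinuousLinearMap.smul_apply, inner_smul_right, eC_pow]


lemma norm_eC_inner_le' (T : H →L[ℂ] H) (n : ℤ) (m : ℕ) (θ : ℝ) (x y : H) :
    ‖eC n θ * ⟪(T ^ m) x, y⟫‖ ≤ ‖T‖ ^ m * ‖x‖ * ‖y‖ := by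
  rw [norm_mul, eC_norm, one_mul, ← inner_conj_symm, RCLike.norm_conj]
  calc ‖(⟪y, (T ^ m) x⟫ : ℂ)‖ ≤ ‖T‖ ^ m * ‖y‖ * ‖x‖ := inner_pow_norm_le T m y x
    _ = ‖T‖ ^ m * ‖x‖ * ‖y‖ := by ring

lemma inner_SS_left (θ : ℝ) (x y : H) :
    ⟪SS T hT θ x, y⟫ = ∑' m : ℕ, eC (-(m : ℤ)) θ * ⟪(T ^ m) x, y⟫ := by
  rw [← inner_conj_symm, inner_SS_right T hT θ y x, RCLike.conj_tsum]
  refine tsum_congr fun m => ?_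
  rw [map_mul, eC_conj, inner_conj_symm]

lemma KK_inner (θ : ℝ) (x y : H) :
    ⟪x, KK T hT θ y⟫ = ⟪x, SS T hT θ y⟫ + ⟪SS T hT θ x, y⟫ - ⟪x, y⟫ := by
  rw [KK]
  simp only [ContinuousLinearMap.sub_apply, ContinuousLinearMap.add_apply,
    ContinuousLinearMap.one_apply, inner_sub_right, inner_add_right,
    ContinuousLinearMap.adjoint_inner_right]

/-- the `m`-th term of the Fourier expansion of `e^{-ikθ}⟪x, K θ y⟫` -/
def ww (T : H →L[ℂ] H) (k : ℕ) (x y : H) (m : ℕ) (θ : ℝ) : ℂ :=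
  eC (-(k : ℤ) + m) θ * ⟪x, (T ^ m) y⟫ + eC (-(k : ℤ) + -(m : ℤ)) θ * ⟪(T ^ m) x, y⟫

lemma ww_bound (T : H →L[ℂ] H) (k : ℕ) (x y : H) (m : ℕ) (θ : ℝ) :
    ‖ww T k x y m θ‖ ≤ 2 * (‖T‖ ^ m * ‖x‖ * ‖y‖) := by
  rw [ww, two_mul]
  exact (norm_add_le _ _).trans
    (add_le_add (norm_eC_inner_le T _ m θ x y) (norm_eC_inner_le' T _ m θ x y))

lemma ww_expand (k : ℕ) (θ : ℝ) (x y : H) :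
    eC (-(k : ℤ)) θ * ⟪x, KK T hT θ y⟫ =
      (∑' m : ℕ, ww T k x y m θ) - eC (-(k : ℤ)) θ * ⟪x, y⟫ := by
  rw [KK_inner, inner_SS_right, inner_SS_left]
  have e1 : ∀ m : ℕ, ww T k x y m θ =
      eC (-(k:ℤ)) θ * (eC (m:ℤ) θ * ⟪x, (T ^ m) y⟫)
      + eC (-(k:ℤ)) θ * (eC (-(m:ℤ)) θ * ⟪(T ^ m) x, y⟫) := by
    intro m
    rw [ww, ← mul_assoc, ← mul_assoc, eC_mul, eC_mul]
  have hA : Summable fun m : ℕ => eC (-(k:ℤ)) θ * (eC (m:ℤ) θ * ⟪x, (T ^ m) y⟫) :=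
    summable_aux T hT x y
      (fun m θ' => eC (-(k:ℤ)) θ' * (eC (m:ℤ) θ' * ⟪x, (T ^ m) y⟫))
      (fun m θ' => by
        rw [← mul_assoc, eC_mul]
        exact norm_eC_inner_le T _ m θ' x y) θ
  have hB : Summable fun m : ℕ => eC (-(k:ℤ)) θ * (eC (-(m:ℤ)) θ * ⟪(T ^ m) x, y⟫) :=
    summable_aux T hT x y
      (fun m θ' => eC (-(k:ℤ)) θ' * (eC (-(m:ℤ)) θ' * ⟪(T ^ m) x, y⟫))
      (fun m θ' => by
        rw [← mul_assoc, eC_mul]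
        exact norm_eC_inner_le' T _ m θ' x y) θ
  have e2 : (∑' m : ℕ, ww T k x y m θ) =
      eC (-(k:ℤ)) θ * (∑' m : ℕ, eC (m:ℤ) θ * ⟪x, (T ^ m) y⟫)
      + eC (-(k:ℤ)) θ * (∑' m : ℕ, eC (-(m:ℤ)) θ * ⟪(T ^ m) x, y⟫) := by
    rw [tsum_congr e1, hA.tsum_add hB, tsum_mul_left, tsum_mul_left]
  rw [e2]
  ring


lemma KK_cont : Continuous fun θ => KK T hT θ := by
  unfold KK
  exact ((SS_cont T hT).add
    ((ContinuousLinearMap.adjoint (𝕜 := ℂ) (E := H) (F := H)).continuous.comp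
      (SS_cont T hT))).sub continuous_const

lemma KK_inner_cont (x y : H) : Continuous fun θ => (⟪x, KK T hT θ y⟫ : ℂ) := by
  have h1 : Continuous fun θ => (KK T hT θ) y :=
    (ContinuousLinearMap.apply ℂ H y).continuous.comp (KK_cont T hT)
  exact Continuous.inner continuous_const h1

lemma ww_cont (k : ℕ) (x y : H) (m : ℕ) : Continuous (ww T k x y m) := by
  unfold ww
  exact ((eC_cont _).mul continuous_const).add ((eC_cont _).mul continuous_const)

lemma integral_ww (k : ℕ) (x y : H) (m : ℕ) :
    ∫ θ in (0:ℝ)..(2 * π), ww T k x y m θ =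
      (if (-(k:ℤ) + m = 0) then ((2 * π : ℝ) : ℂ) else 0) * ⟪x, (T ^ m) y⟫ +
      (if (-(k:ℤ) + -(m:ℤ) = 0) then ((2 * π : ℝ) : ℂ) else 0) * ⟪(T ^ m) x, y⟫ := by
  have i1 : IntervalIntegrable (fun θ => eC (-(k:ℤ) + m) θ * ⟪x, (T ^ m) y⟫)
      MeasureTheory.volume 0 (2 * π) :=
    ((eC_cont _).mul continuous_const).intervalIntegrable _ _
  have i2 : IntervalIntegrable (fun θ => eC (-(k:ℤ) + -(m:ℤ)) θ * ⟪(T ^ m) x, y⟫)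
      MeasureTheory.volume 0 (2 * π) :=
    ((eC_cont _).mul continuous_const).intervalIntegrable _ _
  rw [show (fun θ => ww T k x y m θ) = fun θ =>
      (eC (-(k:ℤ) + m) θ * ⟪x, (T ^ m) y⟫ +
       eC (-(k:ℤ) + -(m:ℤ)) θ * ⟪(T ^ m) x, y⟫) from rfl]
  rw [intervalIntegral.integral_add i1 i2, intervalIntegral.integral_mul_const,
    intervalIntegral.integral_mul_const, integral_eC, integral_eC]

lemma fourier (k : ℕ) (x y : H) :
    ∫ θ in (0:ℝ)..(2 * π), eC (-(k:ℤ)) θ * ⟪x, KK T hT θ y⟫ =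
      ((2 * π : ℝ) : ℂ) * ⟪x, (T ^ k) y⟫ := by
  have hπ : (0:ℝ) ≤ 2 * π := by positivity
  set g : ℝ → ℂ := fun θ => ∑' m : ℕ, ww T k x y m θ with hg
  have hg_eq : ∀ θ, g θ = eC (-(k:ℤ)) θ * ⟪x, KK T hT θ y⟫ + eC (-(k:ℤ)) θ * ⟪x, y⟫ := by
    intro θ
    rw [hg]
    simp only []
    rw [ww_expand T hT k θ x y]
    ring
  have hg_cont : Continuous g := by
    rw [funext hg_eq]
    exact (((eC_cont _).mul (KK_inner_cont T hT x y)).add ((eC_cont _).mul continuous_const))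
  have h2_cont : Continuous fun θ => eC (-(k:ℤ)) θ * (⟪x, y⟫ : ℂ) := (eC_cont _).mul continuous_const
  have h_eq : ∀ θ, eC (-(k:ℤ)) θ * ⟪x, KK T hT θ y⟫ = g θ - eC (-(k:ℤ)) θ * ⟪x, y⟫ := by
    intro θ; rw [hg_eq]; ring
  rw [intervalIntegral.integral_congr (fun θ _ => h_eq θ)]
  rw [intervalIntegral.integral_sub (hg_cont.intervalIntegrable _ _)
    (h2_cont.intervalIntegrable _ _)]
  -- swap sum and integral
  have h_int : ∀ m : ℕ, MeasureTheory.Integrable (ww T k x y m)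
      (MeasureTheory.volume.restrict (Set.Ioc (0:ℝ) (2 * π))) :=
    fun m => (ww_cont T k x y m).integrableOn_Ioc
  have h_sum : Summable fun m : ℕ =>
      ∫ θ in Set.Ioc (0:ℝ) (2 * π), ‖ww T k x y m θ‖ := by
    refine Summable.of_nonneg_of_le
      (f := fun m : ℕ => (2 * π) * (2 * (‖T‖ ^ m * ‖x‖ * ‖y‖)))
      (fun m => MeasureTheory.integral_nonneg fun θ => norm_nonneg _)
      (fun m => ?_) ?_
    · calc ∫ θ in Set.Ioc (0:ℝ) (2 * π), ‖ww T k x y m θ‖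
          ≤ ∫ _ in Set.Ioc (0:ℝ) (2 * π), 2 * (‖T‖ ^ m * ‖x‖ * ‖y‖) := by
            refine MeasureTheory.integral_mono (h_int m).norm ?_
              (fun θ => ww_bound T k x y m θ)
            exact MeasureTheory.integrableOn_const
              measure_Ioc_lt_top.ne
        _ = (2 * π) * (2 * (‖T‖ ^ m * ‖x‖ * ‖y‖)) := by
            rw [MeasureTheory.setIntegral_const, Real.volume_real_Ioc, smul_eq_mul,
              show (2 * π - 0) = 2 * π by ring, max_eq_left hπ]
    · have base : Summable fun m : ℕ => ‖T‖ ^ m :=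
        summable_geometric_of_lt_one (norm_nonneg T) hT
      refine ((base.mul_left (2 * π * 2 * ‖x‖ * ‖y‖)).congr fun m => ?_)
      ring
  have swap : ∫ θ in (0:ℝ)..(2 * π), g θ = ∑' m : ℕ, ∫ θ in (0:ℝ)..(2 * π), ww T k x y m θ := by
    rw [intervalIntegral.integral_of_le hπ]
    rw [← MeasureTheory.integral_tsum_of_summable_integral_norm h_int h_sum]
    exact tsum_congr fun m => (intervalIntegral.integral_of_le hπ).symm
  rw [swap]
  -- value of each term and the final sum
  have hval := integral_ww T k x y
  -- the correction integral
  have hcor : ∫ θ in (0:ℝ)..(2 * π), eC (-(k:ℤ)) θ * (⟪x, y⟫ : ℂ)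
      = (if (-(k:ℤ) = 0) then ((2 * π : ℝ) : ℂ) else 0) * ⟪x, y⟫ := by
    rw [intervalIntegral.integral_mul_const, integral_eC]
  rw [hcor]
  rcases eq_or_ne k 0 with hk | hk
  · subst hk
    have : ∀ m : ℕ, m ≠ 0 → (∫ θ in (0:ℝ)..(2 * π), ww T 0 x y m θ) = 0 := by
      intro m hm
      rw [hval m]
      have h1 : ¬(-((0:ℕ):ℤ) + (m:ℤ) = 0) := by omega
      have h2 : ¬(-((0:ℕ):ℤ) + -(m:ℤ) = 0) := by omega
      rw [if_neg h1, if_neg h2]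
      ring
    rw [tsum_eq_single 0 this, hval 0]
    have h1 : (-((0:ℕ):ℤ) + ((0:ℕ):ℤ) = 0) := by omega
    have h2 : (-((0:ℕ):ℤ) + -((0:ℕ):ℤ) = 0) := by omega
    have h3 : (-((0:ℕ):ℤ) = 0) := by omega
    rw [if_pos h1, if_pos h2, if_pos h3]
    simp only [pow_zero, ContinuousLinearMap.one_apply]
    ring
  · have hkz : ¬(-(k:ℤ) = 0) := by omega
    have : ∀ m : ℕ, m ≠ k → (∫ θ in (0:ℝ)..(2 * π), ww T k x y m θ) = 0 := by
      intro m hm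
      rw [hval m]
      have h1 : ¬(-(k:ℤ) + (m:ℤ) = 0) := by omega
      have h2 : ¬(-(k:ℤ) + -(m:ℤ) = 0) := by omega
      rw [if_neg h1, if_neg h2]
      ring
    rw [tsum_eq_single k this, hval k]
    have h1 : (-(k:ℤ) + k = 0) := by omega
    have h2 : ¬(-(k:ℤ) + -(k:ℤ) = 0) := by omega
    rw [if_pos h1, if_neg h2, if_neg hkz]
    ring


omit [CompleteSpace H] in
lemma cs_semi (T : H →L[ℂ] H) (hT1 : ‖T‖ ≤ 1) (u v : H) :
    ‖(⟪u, v⟫ - ⟪T u, T v⟫ : ℂ)‖ ^ 2 ≤ (‖u‖ ^ 2 - ‖T u‖ ^ 2) * (‖v‖ ^ 2 - ‖T v‖ ^ 2) := by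
  have hTa : ∀ a : H, ‖T a‖ ≤ ‖a‖ := fun a =>
    (T.le_opNorm a).trans (by nlinarith [norm_nonneg a])
  have hre : ∀ a : H, (⟪a, a⟫ - ⟪T a, T a⟫ : ℂ) = ((‖a‖ ^ 2 - ‖T a‖ ^ 2 : ℝ) : ℂ) := by
    intro a
    rw [inner_self_eq_norm_sq_to_K, inner_self_eq_norm_sq_to_K]
    norm_cast
  have hre2 : ∀ a : H, RCLike.re ((⟪a, a⟫ - ⟪T a, T a⟫ : ℂ)) = ‖a‖ ^ 2 - ‖T a‖ ^ 2 := by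
    intro a; rw [hre a, RCLike.re_to_complex, Complex.ofReal_re]
  let core : PreInnerProductSpace.Core ℂ H :=
    { inner := fun a b => (⟪a, b⟫ - ⟪T a, T b⟫ : ℂ)
      conj_inner_symm := fun a b => by
        simp only [map_sub, inner_conj_symm]
      re_inner_nonneg := fun a => by
        simp only [hre2 a]
        nlinarith [hTa a, norm_nonneg a, norm_nonneg (T a)]
      add_left := fun a b z => by
        simp only [map_add, inner_add_left]
        ring
      smul_left := fun a b r => by
        simp only [ContinuousLinearMap.map_smul, inner_smul_left]
        ring }
  have h := @InnerProductSpace.Core.inner_mul_inner_self_le ℂ H _ _ _ core u v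
  have h1 : ‖(⟪u, v⟫ - ⟪T u, T v⟫ : ℂ)‖ * ‖(⟪v, u⟫ - ⟪T v, T u⟫ : ℂ)‖ ≤
      Complex.re (⟪u, u⟫ - ⟪T u, T u⟫ : ℂ) * Complex.re (⟪v, v⟫ - ⟪T v, T v⟫ : ℂ) := h
  have h2 : ‖(⟪v, u⟫ - ⟪T v, T u⟫ : ℂ)‖ = ‖(⟪u, v⟫ - ⟪T u, T v⟫ : ℂ)‖ := by
    rw [show (⟪v, u⟫ - ⟪T v, T u⟫ : ℂ) = conj (⟪u, v⟫ - ⟪T u, T v⟫ : ℂ) by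
      simp only [map_sub, inner_conj_symm], RCLike.norm_conj]
  rw [h2] at h1
  have h3 : Complex.re (⟪u, u⟫ - ⟪T u, T u⟫ : ℂ) = ‖u‖ ^ 2 - ‖T u‖ ^ 2 := by
    rw [hre u, Complex.ofReal_re]
  have h4 : Complex.re (⟪v, v⟫ - ⟪T v, T v⟫ : ℂ) = ‖v‖ ^ 2 - ‖T v‖ ^ 2 := by
    rw [hre v, Complex.ofReal_re]
  rw [h3, h4] at h1
  nlinarith [h1]

/-- the Poisson density `‖S x‖² - ‖T S x‖²` -/
def pp (x : H) (θ : ℝ) : ℝ := ‖SS T hT θ x‖ ^ 2 - ‖T (SS T hT θ x)‖ ^ 2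

lemma pp_nonneg (x : H) (θ : ℝ) : 0 ≤ pp T hT x θ := by
  have hTa : ‖T (SS T hT θ x)‖ ≤ ‖SS T hT θ x‖ :=
    (T.le_opNorm _).trans (by nlinarith [norm_nonneg (SS T hT θ x), hT.le])
  have := norm_nonneg (T (SS T hT θ x))
  rw [pp]
  nlinarith

lemma pp_cont (x : H) : Continuous (pp T hT x) := by
  have h1 : Continuous fun θ => SS T hT θ x :=
    (ContinuousLinearMap.apply ℂ H x).continuous.comp (SS_cont T hT)
  unfold pp
  fun_prop

lemma KK_inner_le (θ : ℝ) (x y : H) :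
    ‖(⟪x, KK T hT θ y⟫ : ℂ)‖ ≤ Real.sqrt (pp T hT x θ) * Real.sqrt (pp T hT y θ) := by
  have h := cs_semi T hT.le (SS T hT θ x) (SS T hT θ y)
  rw [← key_form T hT θ x y] at h
  have h2 : ‖(⟪x, KK T hT θ y⟫ : ℂ)‖ =
      Real.sqrt (‖(⟪x, KK T hT θ y⟫ : ℂ)‖ ^ 2) := by
    rw [Real.sqrt_sq (norm_nonneg _)]
  rw [h2, ← Real.sqrt_mul (pp_nonneg T hT x θ)]
  exact Real.sqrt_le_sqrt h
  
lemma integral_pp (x : H) :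
    ∫ θ in (0:ℝ)..(2 * π), pp T hT x θ = 2 * π * ‖x‖ ^ 2 := by
  have h := fourier T hT 0 x x
  simp only [Nat.cast_zero, neg_zero, pow_zero, ContinuousLinearMap.one_apply] at h
  have h0 : ∀ θ : ℝ, eC 0 θ = 1 := fun θ => by simp [eC]
  simp only [h0, one_mul] at h
  have h1 : ∀ θ : ℝ, (⟪x, KK T hT θ x⟫ : ℂ) = ((pp T hT x θ : ℝ) : ℂ) :=
    fun θ => pos_form T hT θ x
  simp only [h1] at h
  rw [intervalIntegral.integral_ofReal] at h
  have h2 : (⟪x, x⟫ : ℂ) = ((‖x‖ ^ 2 : ℝ) : ℂ) := by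
    rw [inner_self_eq_norm_sq_to_K]; norm_cast
  rw [h2, ← Complex.ofReal_mul] at h
  exact_mod_cast h


lemma eC_neg_one_pow (i : ℕ) (θ : ℝ) : eC (-1) θ ^ i = eC (-(i:ℤ)) θ := by
  unfold eC
  rw [← Complex.exp_nat_mul]
  push_cast; ring_nf

lemma poisson (φ : Polynomial ℂ) (x y : H) :
    ((2 * π : ℝ) : ℂ) * ⟪x, (Polynomial.aeval T φ) y⟫ =
      ∫ θ in (0:ℝ)..(2 * π), φ.eval (eC (-1) θ) * ⟪x, KK T hT θ y⟫ := by
  set n := φ.natDegree with hn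
  have hpt : ∀ θ : ℝ, φ.eval (eC (-1) θ) * ⟪x, KK T hT θ y⟫ =
      ∑ i ∈ Finset.range (n + 1), φ.coeff i * (eC (-(i:ℤ)) θ * ⟪x, KK T hT θ y⟫) := by
    intro θ
    rw [Polynomial.eval_eq_sum_range, Finset.sum_mul]
    refine Finset.sum_congr rfl fun i _ => ?_
    rw [← eC_neg_one_pow i θ]
    ring
  rw [intervalIntegral.integral_congr (fun θ _ => hpt θ)]
  rw [intervalIntegral.integral_finset_sum
    (f := fun i θ => φ.coeff i * (eC (-(i:ℤ)) θ * ⟪x, KK T hT θ y⟫)) (fun i _ =>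
    ((continuous_const.mul ((eC_cont _).mul (KK_inner_cont T hT x y))).intervalIntegrable _ _))]
  have hterm : ∀ i ∈ Finset.range (n + 1),
      (∫ θ in (0:ℝ)..(2 * π), φ.coeff i * (eC (-(i:ℤ)) θ * ⟪x, KK T hT θ y⟫))
        = φ.coeff i * (((2 * π : ℝ) : ℂ) * ⟪x, (T ^ i) y⟫) := by
    intro i _
    rw [intervalIntegral.integral_const_mul, fourier T hT i x y]
  rw [Finset.sum_congr rfl hterm]
  have hL : (Polynomial.aeval T φ) y = ∑ i ∈ Finset.range (n + 1), φ.coeff i • ((T ^ i) y) := by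
    rw [Polynomial.aeval_eq_sum_range]
    rw [ContinuousLinearMap.sum_apply]
    exact Finset.sum_congr rfl fun i _ => rfl
  rw [hL, inner_sum, Finset.mul_sum]
  refine Finset.sum_congr rfl fun i _ => ?_
  rw [inner_smul_right]
  ring

lemma vn_strict (T : H →L[ℂ] H) (hT : ‖T‖ < 1) (φ : Polynomial ℂ) (M : ℝ)
    (hM : ∀ z : ℂ, ‖z‖ ≤ 1 → ‖φ.eval z‖ ≤ M) :
    ‖Polynomial.aeval T φ‖ ≤ M := by
  have hπ : (0:ℝ) ≤ 2 * π := by positivity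
  have hπ' : (0:ℝ) < π := Real.pi_pos
  have hM0 : 0 ≤ M := (norm_nonneg _).trans (hM 0 (by simp))
  refine ContinuousLinearMap.opNorm_le_bound _ hM0 fun y => ?_
  set x := (Polynomial.aeval T φ) y with hx
  rcases eq_or_ne x 0 with h0 | h0
  · rw [h0, norm_zero]
    positivity
  have hy0 : y ≠ 0 := by
    intro h
    exact h0 (by rw [hx, h, map_zero])
  have hxn : 0 < ‖x‖ := norm_pos_iff.2 h0
  have hyn : 0 < ‖y‖ := norm_pos_iff.2 hy0
  set t : ℝ := ‖x‖ / ‖y‖ with ht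
  have htpos : 0 < t := div_pos hxn hyn
  -- pointwise bounds
  have hptb : ∀ θ ∈ Set.Icc (0:ℝ) (2 * π),
      ‖φ.eval (eC (-1) θ) * ⟪x, KK T hT θ y⟫‖ ≤
        M * ((t⁻¹ * pp T hT x θ + t * pp T hT y θ) / 2) := by
    intro θ _
    rw [norm_mul]
    have h1 : ‖φ.eval (eC (-1) θ)‖ ≤ M := hM _ (le_of_eq (eC_norm _ _))
    have h2 : ‖(⟪x, KK T hT θ y⟫ : ℂ)‖ ≤
        Real.sqrt (pp T hT x θ) * Real.sqrt (pp T hT y θ) := KK_inner_le T hT θ x y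
    have h3 : Real.sqrt (pp T hT x θ) * Real.sqrt (pp T hT y θ) ≤
        (t⁻¹ * pp T hT x θ + t * pp T hT y θ) / 2 := by
      have e1 : Real.sqrt (pp T hT x θ) * Real.sqrt (pp T hT y θ)
          = Real.sqrt (t⁻¹ * pp T hT x θ) * Real.sqrt (t * pp T hT y θ) := by
        rw [← Real.sqrt_mul (pp_nonneg T hT x θ),
          ← Real.sqrt_mul (mul_nonneg (inv_nonneg.2 htpos.le) (pp_nonneg T hT x θ))]
        congr 1
        field_simp
      have h4 := two_mul_le_add_sq (Real.sqrt (t⁻¹ * pp T hT x θ))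
        (Real.sqrt (t * pp T hT y θ))
      rw [Real.sq_sqrt (mul_nonneg (inv_nonneg.2 htpos.le) (pp_nonneg T hT x θ)),
        Real.sq_sqrt (mul_nonneg htpos.le (pp_nonneg T hT y θ))] at h4
      rw [e1]
      linarith
    calc ‖φ.eval (eC (-1) θ)‖ * ‖(⟪x, KK T hT θ y⟫ : ℂ)‖
        ≤ M * (Real.sqrt (pp T hT x θ) * Real.sqrt (pp T hT y θ)) :=
          mul_le_mul h1 h2 (norm_nonneg _) hM0
      _ ≤ M * ((t⁻¹ * pp T hT x θ + t * pp T hT y θ) / 2) :=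
          mul_le_mul_of_nonneg_left h3 hM0
  -- integrability
  have hint1 : IntervalIntegrable (fun θ => ‖φ.eval (eC (-1) θ) * ⟪x, KK T hT θ y⟫‖)
      MeasureTheory.volume 0 (2 * π) :=
    (((φ.continuous_aeval).comp (eC_cont _)).mul (KK_inner_cont T hT x y)).norm.intervalIntegrable _ _
  have hint2 : IntervalIntegrable (fun θ => M * ((t⁻¹ * pp T hT x θ + t * pp T hT y θ) / 2))
      MeasureTheory.volume 0 (2 * π) :=
    (continuous_const.mul (((continuous_const.mul (pp_cont T hT x)).add
      (continuous_const.mul (pp_cont T hT y))).div_const 2)).intervalIntegrable _ _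
  -- the main estimate
  have hmain : 2 * π * ‖x‖ ^ 2 ≤ M * (2 * π * (‖x‖ * ‖y‖)) := by
    have e0 : ((2 * π : ℝ) : ℂ) * ⟪x, x⟫ = ((2 * π * ‖x‖ ^ 2 : ℝ) : ℂ) := by
      rw [show (⟪x, x⟫ : ℂ) = ((‖x‖ ^ 2 : ℝ) : ℂ) by rw [inner_self_eq_norm_sq_to_K]; norm_cast]
      norm_cast
    have e1 : 2 * π * ‖x‖ ^ 2 = ‖((2 * π : ℝ) : ℂ) * ⟪x, x⟫‖ := by
      rw [e0, Complex.norm_real, Real.norm_of_nonneg (by positivity)]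
    rw [e1, show (⟪x, x⟫ : ℂ) = ⟪x, (Polynomial.aeval T φ) y⟫ by rw [← hx], poisson T hT φ x y]
    calc ‖∫ θ in (0:ℝ)..(2 * π), φ.eval (eC (-1) θ) * ⟪x, KK T hT θ y⟫‖
        ≤ ∫ θ in (0:ℝ)..(2 * π), ‖φ.eval (eC (-1) θ) * ⟪x, KK T hT θ y⟫‖ :=
          intervalIntegral.norm_integral_le_integral_norm hπ
      _ ≤ ∫ θ in (0:ℝ)..(2 * π), M * ((t⁻¹ * pp T hT x θ + t * pp T hT y θ) / 2) :=
          intervalIntegral.integral_mono_on hπ hint1 hint2 hptb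
      _ = M * ((t⁻¹ * (2 * π * ‖x‖ ^ 2) + t * (2 * π * ‖y‖ ^ 2)) / 2) := by
          rw [intervalIntegral.integral_const_mul]
          congr 1
          rw [intervalIntegral.integral_div]
          congr 1
          rw [intervalIntegral.integral_add (f := fun θ => t⁻¹ * pp T hT x θ)
            (g := fun θ => t * pp T hT y θ)
            ((continuous_const.mul (pp_cont T hT x)).intervalIntegrable _ _)
            ((continuous_const.mul (pp_cont T hT y)).intervalIntegrable _ _),
            intervalIntegral.integral_const_mul, intervalIntegral.integral_const_mul,
            integral_pp T hT x, integral_pp T hT y]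
      _ = M * (2 * π * (‖x‖ * ‖y‖)) := by
          rw [ht]
          field_simp
          ring
  nlinarith [hmain, mul_pos hπ' hxn]

end VN

end VNProof

/-- von Neumann's inequality. For every polynomial `φ` and every
contraction `T` on a complex Hilbert space, `‖φ(T)‖ ≤ max_{|ζ|≤1} |φ(ζ)|`. -/
theorem statement0 {H : Type*} [NormedAddCommGroup H] [InnerProductSpace ℂ H]
    [CompleteSpace H]
    (T : H →L[ℂ] H) (hT : ‖T‖ ≤ 1) (φ : Polynomial ℂ) :
    ‖Polynomial.aeval T φ‖ ≤ ⨆ ζ : closedBall (0 : ℂ) 1, ‖φ.eval (ζ : ℂ)‖ := by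
  set M := ⨆ ζ : closedBall (0 : ℂ) 1, ‖φ.eval (ζ : ℂ)‖ with hMdef
  have hbdd : BddAbove (Set.range fun ζ : closedBall (0:ℂ) 1 => ‖φ.eval (ζ:ℂ)‖) := by
    obtain ⟨C, hC⟩ := (isCompact_closedBall (0:ℂ) 1).exists_bound_of_continuousOn
      φ.continuous_aeval.continuousOn
    refine ⟨C, ?_⟩
    rintro v ⟨ζ, rfl⟩
    exact hC ζ ζ.2
  have hM : ∀ z : ℂ, ‖z‖ ≤ 1 → ‖φ.eval z‖ ≤ M := by
    intro z hz
    exact le_ciSup hbdd (⟨z, by simpa [Metric.mem_closedBall, dist_zero_right] using hz⟩ :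
      closedBall (0:ℂ) 1)
  have key : ∀ r : ℝ, r ∈ Set.Ioo (0:ℝ) 1 → ‖Polynomial.aeval ((r:ℂ) • T) φ‖ ≤ M := by
    intro r hr
    apply VN.vn_strict _ _ φ M hM
    rw [norm_smul, Complex.norm_real, Real.norm_of_nonneg hr.1.le]
    calc r * ‖T‖ ≤ r * 1 := mul_le_mul_of_nonneg_left hT hr.1.le
      _ < 1 := by linarith [hr.2]
  have hcont : ContinuousAt (fun r : ℝ => ‖Polynomial.aeval ((r:ℂ) • T) φ‖) 1 := by
    have h1 : Continuous fun r : ℝ => Polynomial.aeval ((r:ℂ) • T) φ := by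
      have he : (fun r : ℝ => Polynomial.aeval ((r:ℂ) • T) φ) =
          fun r : ℝ => ∑ i ∈ Finset.range (φ.natDegree + 1),
            φ.coeff i • ((r:ℂ) ^ i • T ^ i) := by
        funext r
        rw [Polynomial.aeval_eq_sum_range]
        exact Finset.sum_congr rfl fun i _ => by rw [_root_.smul_pow]
      rw [he]
      refine continuous_finset_sum _ fun i _ => ?_
      exact ((Complex.continuous_ofReal.pow i).smul (continuous_const : Continuous fun _ : ℝ => T ^ i)).const_smul (φ.coeff i)
    exact (h1.norm).continuousAt
  have hone : ((1:ℝ):ℂ) • T = T := by norm_num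
  have hlim : Filter.Tendsto (fun r : ℝ => ‖Polynomial.aeval ((r:ℂ) • T) φ‖) (𝓝[<] (1:ℝ))
      (𝓝 ‖Polynomial.aeval T φ‖) := by
    have h2 := hcont.continuousWithinAt (s := Set.Iio (1:ℝ))
    rw [ContinuousWithinAt] at h2
    simpa [hone] using h2
  refine le_of_tendsto hlim ?_
  filter_upwards [Ioo_mem_nhdsLT_of_mem
    (by constructor <;> norm_num : (1:ℝ) ∈ Set.Ioc (0:ℝ) 1)] with r hr
  exact key r hr


end
end

section
/- Let ℰ₁, ℰ₂ be semi-spectral measures on (X₁,B₁), (X₂,B₂) and Q a Hilbert–Schmidt operator from H₂ to H₁. Then the double operator integral ∬ Φ(x₁,x₂) dℰ₁(x₁) Q dℰ₂(x₂) satisfies ‖∬ Φ dℰ₁ Q dℰ₂‖_{S₂} ≤ sup_{x₁,x₂} |Φ(x₁,x₂)| · ‖Q‖_{S₂} for every bounded measurable function Φ on X₁ × X₂. -/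
open MeasureTheory Filter Topology Metric Polynomial ContinuousLinearMap
open scoped ENNReal NNReal

noncomputable section

section Aux
variable {ι : Type*} {H₁ H₂ : Type*}
    [NormedAddCommGroup H₁] [InnerProductSpace ℂ H₁]
    [NormedAddCommGroup H₂] [InnerProductSpace ℂ H₂] [CompleteSpace H₂]
    (e : HilbertBasis ι ℂ H₂)

lemma hs_coe (Q : H₂ →L[ℂ] H₁) : hsNorm2 e Q = ∑' i, ((‖Q (e i)‖₊ ^ 2 : ℝ≥0) : ℝ≥0∞) := by
  simp [hsNorm2, ENNReal.coe_pow]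

lemma hs_ne_top_iff (Q : H₂ →L[ℂ] H₁) :
    hsNorm2 e Q ≠ ⊤ ↔ Summable (fun i => ‖Q (e i)‖ ^ 2) := by
  rw [hs_coe, ENNReal.tsum_coe_ne_top_iff_summable]
  rw [← NNReal.summable_coe]
  simp [NNReal.coe_pow]

lemma hs_eq (Q : H₂ →L[ℂ] H₁) (h : Summable (fun i => ‖Q (e i)‖ ^ 2)) :
    hsNorm2 e Q = ENNReal.ofReal (∑' i, ‖Q (e i)‖ ^ 2) := by
  rw [hs_coe]
  have h' : Summable (fun i => (‖Q (e i)‖₊ ^ 2 : ℝ≥0)) := by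
    rw [← NNReal.summable_coe]; simpa [NNReal.coe_pow] using h
  rw [← ENNReal.coe_tsum h']
  have : (∑' i, ‖Q (e i)‖ ^ 2) = ((∑' i, ‖Q (e i)‖₊ ^ 2 : ℝ≥0) : ℝ) := by
    rw [NNReal.coe_tsum]; simp [NNReal.coe_pow]
  rw [this, ENNReal.ofReal_coe_nnreal]

end Aux

lemma mul_le_add_sq {a b : ℝ} (ha : 0 ≤ a) (hb : 0 ≤ b) : a * b ≤ a ^ 2 + b ^ 2 := by
  nlinarith [sq_nonneg (a - b)]

lemma sq_le_two_sq_add_two_sq {a : ℝ} {b c : ℝ} (ha : 0 ≤ a) (h : a ≤ b + c) :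
    a ^ 2 ≤ 2 * b ^ 2 + 2 * c ^ 2 := by
  nlinarith [sq_nonneg (b - c), sq_nonneg (b + c)]


lemma sum_sqrt_mul_sqrt_le {α : Type*} (t : Finset α) (a c : α → ℝ)
    (ha : ∀ z ∈ t, 0 ≤ a z) (hc : ∀ z ∈ t, 0 ≤ c z) :
    ∑ z ∈ t, Real.sqrt (a z) * Real.sqrt (c z)
      ≤ Real.sqrt (∑ z ∈ t, a z) * Real.sqrt (∑ z ∈ t, c z) := by
  have h1 := Finset.sum_mul_sq_le_sq_mul_sq t (fun z => Real.sqrt (a z))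
    (fun z => Real.sqrt (c z))
  have e1 : ∑ z ∈ t, Real.sqrt (a z) ^ 2 = ∑ z ∈ t, a z :=
    Finset.sum_congr rfl fun z hz => Real.sq_sqrt (ha z hz)
  have e2 : ∑ z ∈ t, Real.sqrt (c z) ^ 2 = ∑ z ∈ t, c z :=
    Finset.sum_congr rfl fun z hz => Real.sq_sqrt (hc z hz)
  rw [e1, e2] at h1
  have hS : 0 ≤ ∑ z ∈ t, Real.sqrt (a z) * Real.sqrt (c z) :=
    Finset.sum_nonneg fun z _ => mul_nonneg (Real.sqrt_nonneg _) (Real.sqrt_nonneg _)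
  calc ∑ z ∈ t, Real.sqrt (a z) * Real.sqrt (c z)
      = Real.sqrt ((∑ z ∈ t, Real.sqrt (a z) * Real.sqrt (c z)) ^ 2) :=
        (Real.sqrt_sq hS).symm
  _ ≤ Real.sqrt ((∑ z ∈ t, a z) * (∑ z ∈ t, c z)) := Real.sqrt_le_sqrt h1
  _ = Real.sqrt (∑ z ∈ t, a z) * Real.sqrt (∑ z ∈ t, c z) :=
        Real.sqrt_mul (Finset.sum_nonneg ha) _

section AuxAbs
variable {ι : Type*} {H : Type*} [NormedAddCommGroup H] [InnerProductSpace ℂ H]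

lemma summable_inner_abs {f g : ι → H} (hf : Summable (fun i => ‖f i‖ ^ 2))
    (hg : Summable (fun i => ‖g i‖ ^ 2)) :
    Summable (fun i => (inner ℂ (f i) (g i) : ℂ)) := by
  refine Summable.of_norm (Summable.of_nonneg_of_le (fun i => norm_nonneg _)
    (fun i => ?_) (hf.add hg))
  calc ‖(inner ℂ (f i) (g i) : ℂ)‖ ≤ ‖f i‖ * ‖g i‖ := norm_inner_le_norm _ _
  _ ≤ ‖f i‖ ^ 2 + ‖g i‖ ^ 2 := mul_le_add_sq (norm_nonneg _) (norm_nonneg _)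

lemma sqs_add_abs {f g : ι → H} (hf : Summable (fun i => ‖f i‖ ^ 2))
    (hg : Summable (fun i => ‖g i‖ ^ 2)) :
    Summable (fun i => ‖f i + g i‖ ^ 2) := by
  exact Summable.of_nonneg_of_le (fun i => sq_nonneg _)
    (fun i => sq_le_two_sq_add_two_sq (norm_nonneg _) (norm_add_le _ _))
    ((hf.mul_left 2).add (hg.mul_left 2))

end AuxAbs

section Aux2
variable {ι : Type*} {H₁ H₂ : Type*}
    [NormedAddCommGroup H₁] [InnerProductSpace ℂ H₁]
    [NormedAddCommGroup H₂] [InnerProductSpace ℂ H₂] [CompleteSpace H₂]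
    (e : HilbertBasis ι ℂ H₂)

lemma summable_inner' {Q R : H₂ →L[ℂ] H₁} (hQ : Summable (fun i => ‖Q (e i)‖ ^ 2))
    (hR : Summable (fun i => ‖R (e i)‖ ^ 2)) :
    Summable (fun i => (inner ℂ (Q (e i)) (R (e i)) : ℂ)) :=
  summable_inner_abs hQ hR

lemma sqs_add {Q R : H₂ →L[ℂ] H₁} (hQ : Summable (fun i => ‖Q (e i)‖ ^ 2))
    (hR : Summable (fun i => ‖R (e i)‖ ^ 2)) :
    Summable (fun i => ‖(Q + R) (e i)‖ ^ 2) := by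
  have := sqs_add_abs hQ hR
  simpa using this

lemma sqs_smul {Q : H₂ →L[ℂ] H₁} (hQ : Summable (fun i => ‖Q (e i)‖ ^ 2)) (c : ℂ) :
    Summable (fun i => ‖(c • Q) (e i)‖ ^ 2) := by
  simpa [mul_pow, norm_smul] using hQ.mul_left (‖c‖ ^ 2)

lemma hsInner_add_left {Q Q' R : H₂ →L[ℂ] H₁} (hQ : Summable (fun i => ‖Q (e i)‖ ^ 2))
    (hQ' : Summable (fun i => ‖Q' (e i)‖ ^ 2)) (hR : Summable (fun i => ‖R (e i)‖ ^ 2)) :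
    hsInner e (Q + Q') R = hsInner e Q R + hsInner e Q' R := by
  unfold hsInner
  rw [← Summable.tsum_add (summable_inner' e hQ hR) (summable_inner' e hQ' hR)]
  simp [inner_add_left]

lemma hsInner_add_right {Q R R' : H₂ →L[ℂ] H₁} (hQ : Summable (fun i => ‖Q (e i)‖ ^ 2))
    (hR : Summable (fun i => ‖R (e i)‖ ^ 2)) (hR' : Summable (fun i => ‖R' (e i)‖ ^ 2)) :
    hsInner e Q (R + R') = hsInner e Q R + hsInner e Q R' := by
  unfold hsInner
  rw [← Summable.tsum_add (summable_inner' e hQ hR) (summable_inner' e hQ hR')]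
  simp [inner_add_right]

lemma hsInner_smul_left (c : ℂ) (Q R : H₂ →L[ℂ] H₁) :
    hsInner e (c • Q) R = (starRingEnd ℂ) c * hsInner e Q R := by
  unfold hsInner
  rw [← tsum_mul_left]
  simp [inner_smul_left]
  exact tsum_congr fun i => mul_comm _ _

lemma hsInner_smul_right (c : ℂ) (Q R : H₂ →L[ℂ] H₁) :
    hsInner e Q (c • R) = c * hsInner e Q R := by
  unfold hsInner
  rw [← tsum_mul_left]
  simp [inner_smul_right]

lemma hsInner_zero_left (R : H₂ →L[ℂ] H₁) : hsInner e 0 R = 0 := by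
  simp [hsInner]

lemma hsInner_self (Q : H₂ →L[ℂ] H₁) :
    hsInner e Q Q = ((∑' i, ‖Q (e i)‖ ^ 2 : ℝ) : ℂ) := by
  unfold hsInner
  have h : ∀ i, (inner ℂ (Q (e i)) (Q (e i)) : ℂ) = ((‖Q (e i)‖ ^ 2 : ℝ) : ℂ) := by
    intro i
    rw [inner_self_eq_norm_sq_to_K]
    norm_cast
  rw [tsum_congr h]
  exact (Complex.ofReal_tsum _).symm

lemma sqs_sum {α : Type*} (t : Finset α) (f : α → (H₂ →L[ℂ] H₁))
    (h : ∀ a ∈ t, Summable fun i => ‖f a (e i)‖ ^ 2) :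
    Summable fun i => ‖(∑ a ∈ t, f a) (e i)‖ ^ 2 := by
  classical
  induction t using Finset.induction_on with
  | empty => simpa using summable_zero
  | insert _ _ hnotmem ih =>
    rename_i a t
    rw [Finset.sum_insert hnotmem]
    exact sqs_add e (h a (Finset.mem_insert_self a t))
      (ih fun b hb => h b (Finset.mem_insert_of_mem hb))

lemma hsInner_sum_left {α : Type*} (t : Finset α) (f : α → (H₂ →L[ℂ] H₁))
    {R : H₂ →L[ℂ] H₁} (h : ∀ a ∈ t, Summable fun i => ‖f a (e i)‖ ^ 2)
    (hR : Summable fun i => ‖R (e i)‖ ^ 2) :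
    hsInner e (∑ a ∈ t, f a) R = ∑ a ∈ t, hsInner e (f a) R := by
  classical
  induction t using Finset.induction_on with
  | empty => simpa using hsInner_zero_left e R
  | insert _ _ hnotmem ih =>
    rename_i a t
    rw [Finset.sum_insert hnotmem, Finset.sum_insert hnotmem]
    rw [hsInner_add_left e (h a (Finset.mem_insert_self a t))
      (sqs_sum e t f fun b hb => h b (Finset.mem_insert_of_mem hb)) hR]
    rw [ih fun b hb => h b (Finset.mem_insert_of_mem hb)]

lemma nnreal_eps_sq {u v ε : ℝ≥0} (hε : 0 < ε) :
    (u + v) ^ 2 ≤ (1 + ε) * u ^ 2 + (1 + ε⁻¹) * v ^ 2 := by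
  have hε' : (0 : ℝ) < (ε : ℝ) := hε
  rw [← NNReal.coe_le_coe]
  push_cast
  have hc : (ε : ℝ) * (ε : ℝ)⁻¹ = 1 := mul_inv_cancel₀ (ne_of_gt hε')
  nlinarith [sq_nonneg ((ε : ℝ) * (u : ℝ) - (v : ℝ)), mul_self_nonneg (u : ℝ),
    NNReal.coe_nonneg u, NNReal.coe_nonneg v, sq_nonneg ((u : ℝ) - (v : ℝ)),
    mul_nonneg (NNReal.coe_nonneg u) (NNReal.coe_nonneg v)]

lemma hsNorm2_neg (U : H₂ →L[ℂ] H₁) : hsNorm2 e (-U) = hsNorm2 e U := by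
  simp [hsNorm2]

lemma hs_triangle_eps (ε : ℝ≥0) (hε : 0 < ε) (U V : H₂ →L[ℂ] H₁) :
    hsNorm2 e (U + V) ≤ (1 + (ε : ℝ≥0∞)) * hsNorm2 e U
      + (1 + (ε : ℝ≥0∞)⁻¹) * hsNorm2 e V := by
  unfold hsNorm2
  rw [← ENNReal.tsum_mul_left, ← ENNReal.tsum_mul_left, ← ENNReal.tsum_add]
  apply ENNReal.tsum_le_tsum
  intro i
  have hn : ‖(U + V) (e i)‖₊ ≤ ‖U (e i)‖₊ + ‖V (e i)‖₊ := by
    simp only [ContinuousLinearMap.add_apply]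
    exact nnnorm_add_le _ _
  have key := nnreal_eps_sq (u := ‖U (e i)‖₊) (v := ‖V (e i)‖₊) hε
  calc ((‖(U + V) (e i)‖₊ : ℝ≥0∞)) ^ 2
      ≤ ((((‖U (e i)‖₊ + ‖V (e i)‖₊ : ℝ≥0)) : ℝ≥0∞)) ^ 2 := by
        gcongr <;> exact_mod_cast hn
  _ = ((((‖U (e i)‖₊ + ‖V (e i)‖₊ : ℝ≥0)) ^ 2 : ℝ≥0) : ℝ≥0∞) := by
        rw [ENNReal.coe_pow]
  _ ≤ ((((1 + ε) * ‖U (e i)‖₊ ^ 2 + (1 + ε⁻¹) * ‖V (e i)‖₊ ^ 2 : ℝ≥0)) : ℝ≥0∞) := by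
        exact_mod_cast key
  _ = (1 + (ε : ℝ≥0∞)) * (‖U (e i)‖₊ : ℝ≥0∞) ^ 2
      + (1 + (ε : ℝ≥0∞)⁻¹) * (‖V (e i)‖₊ : ℝ≥0∞) ^ 2 := by
        push_cast [ENNReal.coe_inv (ne_of_gt hε)]
        ring

end Aux2

section Form
open Filter

variable {ι X₁ X₂ : Type*} [MeasurableSpace X₁] [MeasurableSpace X₂]
    {H₁ H₂ : Type*}
    [NormedAddCommGroup H₁] [InnerProductSpace ℂ H₁] [CompleteSpace H₁]
    [NormedAddCommGroup H₂] [InnerProductSpace ℂ H₂] [CompleteSpace H₂]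
    {e : HilbertBasis ι ℂ H₂}
    {ℰ₁ : Set X₁ → H₁ →L[ℂ] H₁} {ℰ₂ : Set X₂ → H₂ →L[ℂ] H₂}
    {F : Set (X₁ × X₂) → (H₂ →L[ℂ] H₁) → (H₂ →L[ℂ] H₁)}
    (hF : IsProductSSM e ℰ₁ ℰ₂ F)

include hF

/-- summability notation -/
local notation "Fin2" Q => Summable (fun i => ‖Q (e i)‖ ^ 2)

lemma F_sqs {Ω : Set (X₁ × X₂)} (hΩ : MeasurableSet Ω) {Q : H₂ →L[ℂ] H₁}
    (hQ : Summable (fun i => ‖Q (e i)‖ ^ 2)) :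
    Summable (fun i => ‖(F Ω Q) (e i)‖ ^ 2) := by
  have h1 := hF.2.1 Ω hΩ Q ((hs_ne_top_iff e Q).2 hQ)
  exact (hs_ne_top_iff e _).1 (ne_top_of_le_ne_top ((hs_ne_top_iff e Q).2 hQ) h1)

lemma F_pos {Ω : Set (X₁ × X₂)} (hΩ : MeasurableSet Ω) {Q : H₂ →L[ℂ] H₁}
    (hQ : Summable (fun i => ‖Q (e i)‖ ^ 2)) :
    0 ≤ (hsInner e (F Ω Q) Q).re ∧ (hsInner e (F Ω Q) Q).im = 0 :=
  hF.2.2.2.1 Ω hΩ Q ((hs_ne_top_iff e Q).2 hQ)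

lemma F_herm {Ω : Set (X₁ × X₂)} (hΩ : MeasurableSet Ω) {Q R : H₂ →L[ℂ] H₁}
    (hQ : Summable (fun i => ‖Q (e i)‖ ^ 2)) (hR : Summable (fun i => ‖R (e i)‖ ^ 2)) :
    hsInner e (F Ω R) Q = (starRingEnd ℂ) (hsInner e (F Ω Q) R) := by
  have lin := hF.1 Ω hΩ
  set u := hsInner e (F Ω Q) R with hu
  set v := hsInner e (F Ω R) Q with hv
  have hFQ := F_sqs hF hΩ hQ
  have hFR := F_sqs hF hΩ hR
  -- first polarization identity
  have h1 : (hsInner e (F Ω (Q + R)) (Q + R)).im = 0 := (F_pos hF hΩ (sqs_add e hQ hR)).2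
  have e1 : hsInner e (F Ω (Q + R)) (Q + R)
      = hsInner e (F Ω Q) Q + u + v + hsInner e (F Ω R) R := by
    rw [lin.map_add]
    rw [hsInner_add_left e hFQ hFR (sqs_add e hQ hR)]
    rw [hsInner_add_right e hFQ hQ hR, hsInner_add_right e hFR hQ hR]
    ring
  have him1 : (u + v).im = 0 := by
    have := h1
    rw [e1] at this
    have dQ := (F_pos hF hΩ hQ).2
    have dR := (F_pos hF hΩ hR).2
    simp only [Complex.add_im] at this ⊢
    linarith
  -- second polarization identity with I
  have hIR : Summable (fun i => ‖(Complex.I • R) (e i)‖ ^ 2) := sqs_smul e hR Complex.I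
  have h2 : (hsInner e (F Ω (Q + Complex.I • R)) (Q + Complex.I • R)).im = 0 :=
    (F_pos hF hΩ (sqs_add e hQ hIR)).2
  have e2 : hsInner e (F Ω (Q + Complex.I • R)) (Q + Complex.I • R)
      = hsInner e (F Ω Q) Q + Complex.I * u - Complex.I * v + hsInner e (F Ω R) R := by
    rw [lin.map_add, lin.map_smul]
    have hIFR : Summable (fun i => ‖(Complex.I • F Ω R) (e i)‖ ^ 2) := sqs_smul e hFR Complex.I
    rw [hsInner_add_left e hFQ hIFR (sqs_add e hQ hIR)]
    rw [hsInner_add_right e hFQ hQ hIR, hsInner_add_right e hIFR hQ hIR]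
    rw [hsInner_smul_right, hsInner_smul_left, hsInner_smul_left, hsInner_smul_right]
    simp [Complex.conj_I]
    linear_combination (-(hsInner e (F Ω R) R)) * Complex.I_sq
  have him2 : (u - v).re = 0 := by
    have := h2
    rw [e2] at this
    have dQ := (F_pos hF hΩ hQ).2
    have dR := (F_pos hF hΩ hR).2
    simp only [Complex.add_im, Complex.sub_im, Complex.mul_im, Complex.I_re, Complex.I_im,
      Complex.sub_re] at this ⊢
    linarith
  -- conclude
  apply Complex.ext
  · have : u.re - v.re = 0 := by
      simpa [Complex.sub_re] using him2
    simp only [Complex.conj_re]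
    linarith
  · have : u.im + v.im = 0 := by
      simpa [Complex.add_im] using him1
    simp only [Complex.conj_im]
    linarith


lemma F_cs {Ω : Set (X₁ × X₂)} (hΩ : MeasurableSet Ω) {Q R : H₂ →L[ℂ] H₁}
    (hQ : Summable (fun i => ‖Q (e i)‖ ^ 2)) (hR : Summable (fun i => ‖R (e i)‖ ^ 2)) :
    ‖hsInner e (F Ω Q) R‖ ^ 2
      ≤ (hsInner e (F Ω Q) Q).re * (hsInner e (F Ω R) R).re := by
  have lin := hF.1 Ω hΩ
  have hFQ := F_sqs hF hΩ hQ
  have hFR := F_sqs hF hΩ hR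
  set b := hsInner e (F Ω Q) R with hb
  by_cases hb0 : b = 0
  · rw [hb0]
    simpa using mul_nonneg (F_pos hF hΩ hQ).1 (F_pos hF hΩ hR).1
  · have habs : (‖b‖ : ℝ) ≠ 0 := by simpa using hb0
    have habsC : ((‖b‖ : ℝ) : ℂ) ≠ 0 := by exact_mod_cast habs
    obtain ⟨θ, hθb, hnθ⟩ : ∃ θ : ℂ, θ * b = -(((‖b‖ : ℝ)) : ℂ)
        ∧ Complex.normSq θ = 1 := by
      refine ⟨-((starRingEnd ℂ) b) / ((‖b‖ : ℝ) : ℂ), ?_, ?_⟩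
      · rw [div_mul_eq_mul_div, neg_mul, mul_comm ((starRingEnd ℂ) b) b, Complex.mul_conj,
          Complex.normSq_eq_norm_sq]
        push_cast
        field_simp
      · rw [Complex.normSq_div]
        simp only [Complex.normSq_neg, Complex.normSq_conj]
        rw [Complex.normSq_ofReal, Complex.normSq_eq_norm_sq]
        field_simp
    have hcc : (starRingEnd ℂ) θ * (starRingEnd ℂ) b = -(((‖b‖ : ℝ)) : ℂ) := by
      rw [← map_mul, hθb]
      simp [Complex.conj_ofReal]
    have hθθ : (starRingEnd ℂ) θ * θ = 1 := by
      rw [mul_comm, Complex.mul_conj, hnθ]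
      simp
    have key : ∀ t : ℝ, 0 ≤ (hsInner e (F Ω R) R).re * (t * t)
        + (-(2 * ‖b‖)) * t + (hsInner e (F Ω Q) Q).re := by
      intro t
      have hsm : Summable (fun i => ‖((((t : ℂ) * θ) • R)) (e i)‖ ^ 2) := sqs_smul e hR _
      have hP : Summable (fun i => ‖((Q + ((t : ℂ) * θ) • R)) (e i)‖ ^ 2) := sqs_add e hQ hsm
      have pos := (F_pos hF hΩ hP).1
      have expand : hsInner e (F Ω (Q + ((t : ℂ) * θ) • R)) (Q + ((t : ℂ) * θ) • R)
          = hsInner e (F Ω Q) Q + ((t * t : ℝ) : ℂ) * hsInner e (F Ω R) R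
            - ((2 * t * ‖b‖ : ℝ) : ℂ) := by
        rw [lin.map_add, lin.map_smul]
        rw [hsInner_add_left e hFQ (sqs_smul e hFR _) hP]
        rw [hsInner_add_right e hFQ hQ hsm, hsInner_add_right e (sqs_smul e hFR _) hQ hsm]
        rw [hsInner_smul_right, hsInner_smul_left, hsInner_smul_left, hsInner_smul_right]
        rw [F_herm hF hΩ hQ hR, ← hb]
        simp only [map_mul, Complex.conj_ofReal]
        push_cast
        linear_combination (t : ℂ) * hθb + (t : ℂ) * hcc
          + ((t : ℂ) * (t : ℂ) * hsInner e (F Ω R) R) * hθθ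
      rw [expand] at pos
      simp only [Complex.add_re, Complex.sub_re, Complex.re_ofReal_mul,
        Complex.ofReal_re] at pos
      linarith
    have disc := discrim_le_zero key
    rw [discrim] at disc
    nlinarith [disc]

lemma F_finadd (s : MeasureTheory.SimpleFunc (X₁ × X₂) ℂ) {Q R : H₂ →L[ℂ] H₁}
    (hQ : Summable (fun i => ‖Q (e i)‖ ^ 2)) (hR : Summable (fun i => ‖R (e i)‖ ^ 2)) :
    ∑ z ∈ s.range, hsInner e (F (⇑s ⁻¹' {z}) Q) R = hsInner e Q R := by
  classical
  set n := s.range.card with hn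
  set φ : Fin n ≃ {x // x ∈ s.range} := s.range.equivFin.symm with hφ
  set Ω : ℕ → Set (X₁ × X₂) := fun j => if h : j < n then ⇑s ⁻¹' {(φ ⟨j, h⟩ : ℂ)} else ∅
    with hΩdef
  have hmeas : ∀ j, MeasurableSet (Ω j) := by
    intro j
    by_cases h : j < n
    · simp only [Ω, dif_pos h]
      exact s.measurableSet_fiber _
    · simp only [Ω, dif_neg h]
      exact MeasurableSet.empty
  have hdisj : Pairwise (Function.onFun Disjoint Ω) := by
    intro i j hij
    unfold Function.onFun
    by_cases hi : i < n
    · by_cases hj : j < n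
      · simp only [Ω, dif_pos hi, dif_pos hj]
        refine Set.disjoint_left.2 fun x hx1 hx2 => ?_
        simp only [Set.mem_preimage, Set.mem_singleton_iff] at hx1 hx2
        have h1 : (φ ⟨i, hi⟩ : ℂ) = (φ ⟨j, hj⟩ : ℂ) := by rw [← hx1, hx2]
        have h2 := φ.injective (Subtype.coe_injective h1)
        exact hij (by simpa using congrArg Fin.val h2)
      · simp only [Ω, dif_neg hj]
        exact Set.disjoint_empty _
    · simp only [Ω, dif_neg hi]
      exact Set.empty_disjoint _
  have hunion : (⋃ j, Ω j) = Set.univ := by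
    ext x
    simp only [Set.mem_iUnion, Set.mem_univ, iff_true]
    have hx : s x ∈ s.range := s.mem_range_self x
    refine ⟨(φ.symm ⟨s x, hx⟩ : Fin n), ?_⟩
    have hlt : ((φ.symm ⟨s x, hx⟩ : Fin n) : ℕ) < n := (φ.symm ⟨s x, hx⟩).isLt
    simp only [Ω, dif_pos hlt, Set.mem_preimage, Set.mem_singleton_iff]
    have : (⟨((φ.symm ⟨s x, hx⟩ : Fin n) : ℕ), hlt⟩ : Fin n) = φ.symm ⟨s x, hx⟩ := by
      apply Fin.ext
      rfl
    rw [this]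
    simp
  have htend := hF.2.2.2.2.2.2 Ω hmeas hdisj Q R ((hs_ne_top_iff e Q).2 hQ)
    ((hs_ne_top_iff e R).2 hR)
  rw [hunion, hF.2.2.2.2.2.1 Q ((hs_ne_top_iff e Q).2 hQ)] at htend
  have hconst : ∀ N ≥ n, ∑ j ∈ Finset.range N, hsInner e (F (Ω j) Q) R
      = ∑ z ∈ s.range, hsInner e (F (⇑s ⁻¹' {z}) Q) R := by
    intro N hN
    have h0 : ∀ j ∈ Finset.range N, j ∉ Finset.range n → hsInner e (F (Ω j) Q) R = 0 := by
      intro j _ hj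
      have hjn : ¬ j < n := by simpa using hj
      simp only [Ω, dif_neg hjn]
      rw [hF.2.2.2.2.1 Q]
      exact hsInner_zero_left e R
    rw [← Finset.sum_subset (Finset.range_subset_range.2 hN) h0]
    rw [Finset.sum_range]
    rw [← Finset.sum_coe_sort (s.range) (fun z => hsInner e (F (⇑s ⁻¹' {(z : ℂ)}) Q) R)]
    rw [← Equiv.sum_comp φ (fun w => hsInner e (F (⇑s ⁻¹' {(w : ℂ)}) Q) R)]
    apply Finset.sum_congr rfl
    intro k _
    have hk : (k : ℕ) < n := k.isLt
    simp only [Ω, dif_pos hk]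
  have heq := tendsto_nhds_unique
    (htend.congr' (Filter.eventually_atTop.2 ⟨n, hconst⟩)) tendsto_const_nhds
  exact heq.symm

lemma F_sum_bound (s : MeasureTheory.SimpleFunc (X₁ × X₂) ℂ) {Q : H₂ →L[ℂ] H₁}
    (hQ : Summable fun i => ‖Q (e i)‖ ^ 2) {B : ℝ} (hB0 : 0 ≤ B)
    (hB : ∀ z ∈ s.range, ‖z‖ ≤ B) :
    hsNorm2 e (∑ z ∈ s.range, z • F (⇑s ⁻¹' {z}) Q)
      ≤ ENNReal.ofReal (B ^ 2) * hsNorm2 e Q := by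
  classical
  set P : H₂ →L[ℂ] H₁ := ∑ z ∈ s.range, z • F (⇑s ⁻¹' {z}) Q with hPdef
  have hterm : ∀ z ∈ s.range, Summable fun i => ‖(z • F (⇑s ⁻¹' {z}) Q) (e i)‖ ^ 2 :=
    fun z _ => sqs_smul e (F_sqs hF (s.measurableSet_fiber z) hQ) z
  have hPs : Summable fun i => ‖P (e i)‖ ^ 2 := sqs_sum e _ _ hterm
  -- expansion of the HS inner product
  have e1 : hsInner e P P
      = ∑ z ∈ s.range, (starRingEnd ℂ) z * hsInner e (F (⇑s ⁻¹' {z}) Q) P := by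
    calc hsInner e P P = ∑ z ∈ s.range, hsInner e (z • F (⇑s ⁻¹' {z}) Q) P :=
          hsInner_sum_left e _ _ hterm hPs
    _ = _ := Finset.sum_congr rfl fun z _ => hsInner_smul_left e z _ P
  -- real quantities
  set nQ : ℝ := ∑' i, ‖Q (e i)‖ ^ 2 with hnQ
  set nP : ℝ := ∑' i, ‖P (e i)‖ ^ 2 with hnP
  have hnQ0 : 0 ≤ nQ := tsum_nonneg fun i => sq_nonneg _
  have hnP0 : 0 ≤ nP := tsum_nonneg fun i => sq_nonneg _
  have hPP : (hsInner e P P).re = nP := by rw [hsInner_self e P]; simp; rfl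
  -- additivity of the diagonal values
  have haddQ : ∑ z ∈ s.range, (hsInner e (F (⇑s ⁻¹' {z}) Q) Q).re = nQ := by
    rw [← Complex.re_sum, F_finadd hF s hQ hQ, hsInner_self e Q]
    simp
    rfl
  have haddP : ∑ z ∈ s.range, (hsInner e (F (⇑s ⁻¹' {z}) P) P).re = nP := by
    rw [← Complex.re_sum, F_finadd hF s hPs hPs, hsInner_self e P]
    simp
    rfl
  -- the key estimate : nP ≤ B * sqrt nQ * sqrt nP
  have hkey : nP ≤ B * (Real.sqrt nQ * Real.sqrt nP) := by
    have hexp : nP = ∑ z ∈ s.range, ((starRingEnd ℂ) z * hsInner e (F (⇑s ⁻¹' {z}) Q) P).re := by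
      rw [← hPP, e1, Complex.re_sum]
    have hterm2 : ∀ z ∈ s.range,
        ((starRingEnd ℂ) z * hsInner e (F (⇑s ⁻¹' {z}) Q) P).re
          ≤ B * (Real.sqrt ((hsInner e (F (⇑s ⁻¹' {z}) Q) Q).re)
              * Real.sqrt ((hsInner e (F (⇑s ⁻¹' {z}) P) P).re)) := by
      intro z hz
      have hmeasz := s.measurableSet_fiber z
      have hcs := F_cs hF hmeasz hQ hPs
      have haz := (F_pos hF hmeasz hQ).1
      have hcz := (F_pos hF hmeasz hPs).1
      have h3 : ((starRingEnd ℂ) z * hsInner e (F (⇑s ⁻¹' {z}) Q) P).re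
          ≤ ‖z‖ * ‖hsInner e (F (⇑s ⁻¹' {z}) Q) P‖ := by
        calc ((starRingEnd ℂ) z * hsInner e (F (⇑s ⁻¹' {z}) Q) P).re
            ≤ ‖(starRingEnd ℂ) z * hsInner e (F (⇑s ⁻¹' {z}) Q) P‖ :=
              Complex.re_le_norm _
        _ = ‖z‖ * ‖hsInner e (F (⇑s ⁻¹' {z}) Q) P‖ := by
              rw [norm_mul, Complex.norm_conj]
      have h4 : ‖hsInner e (F (⇑s ⁻¹' {z}) Q) P‖
          ≤ Real.sqrt ((hsInner e (F (⇑s ⁻¹' {z}) Q) Q).re)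
            * Real.sqrt ((hsInner e (F (⇑s ⁻¹' {z}) P) P).re) := by
        rw [← Real.sqrt_mul haz]
        rw [← Real.sqrt_sq (norm_nonneg _)]
        exact Real.sqrt_le_sqrt hcs
      calc ((starRingEnd ℂ) z * hsInner e (F (⇑s ⁻¹' {z}) Q) P).re
          ≤ ‖z‖ * ‖hsInner e (F (⇑s ⁻¹' {z}) Q) P‖ := h3
      _ ≤ B * (Real.sqrt ((hsInner e (F (⇑s ⁻¹' {z}) Q) Q).re)
            * Real.sqrt ((hsInner e (F (⇑s ⁻¹' {z}) P) P).re)) := by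
          apply mul_le_mul (hB z hz) h4 (norm_nonneg _) hB0
    calc nP = ∑ z ∈ s.range, ((starRingEnd ℂ) z * hsInner e (F (⇑s ⁻¹' {z}) Q) P).re := hexp
    _ ≤ ∑ z ∈ s.range, B * (Real.sqrt ((hsInner e (F (⇑s ⁻¹' {z}) Q) Q).re)
            * Real.sqrt ((hsInner e (F (⇑s ⁻¹' {z}) P) P).re)) :=
          Finset.sum_le_sum hterm2
    _ = B * ∑ z ∈ s.range, Real.sqrt ((hsInner e (F (⇑s ⁻¹' {z}) Q) Q).re)
            * Real.sqrt ((hsInner e (F (⇑s ⁻¹' {z}) P) P).re) := by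
          rw [Finset.mul_sum]
    _ ≤ B * (Real.sqrt nQ * Real.sqrt nP) := by
          apply mul_le_mul_of_nonneg_left _ hB0
          rw [← haddQ, ← haddP]
          exact sum_sqrt_mul_sqrt_le _ _ _
            (fun z hz => (F_pos hF (s.measurableSet_fiber z) hQ).1)
            (fun z hz => (F_pos hF (s.measurableSet_fiber z) hPs).1)
  -- conclude nP ≤ B^2 * nQ
  have hfinal : nP ≤ B ^ 2 * nQ := by
    nlinarith [Real.sq_sqrt hnQ0, Real.sq_sqrt hnP0, Real.sqrt_nonneg nQ, Real.sqrt_nonneg nP,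
      sq_nonneg (B * Real.sqrt nQ - Real.sqrt nP)]
  rw [hs_eq e P hPs, hs_eq e Q hQ]
  rw [← ENNReal.ofReal_mul (by positivity)]
  exact ENNReal.ofReal_le_ofReal hfinal

end Form

section Approx
open Filter

/-- rounding to the grid `(1/(m+1))·(ℤ + iℤ)` -/
def gridFun (m : ℕ) (z : ℂ) : ℂ :=
  (((⌊z.re * (m + 1)⌋ : ℝ) / (m + 1) : ℝ) : ℂ)
    + (((⌊z.im * (m + 1)⌋ : ℝ) / (m + 1) : ℝ) : ℂ) * Complex.I

lemma gridFun_measurable (m : ℕ) : Measurable (gridFun m) := by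
  unfold gridFun
  apply Measurable.add
  · apply Complex.measurable_ofReal.comp
    apply Measurable.div_const
    exact measurable_from_top.comp (Measurable.floor (Complex.measurable_re.mul_const _))
  · apply Measurable.mul_const
    apply Complex.measurable_ofReal.comp
    apply Measurable.div_const
    exact measurable_from_top.comp (Measurable.floor (Complex.measurable_im.mul_const _))

lemma floor_div_approx (k : ℝ) (hk : 0 < k) (x : ℝ) : |(⌊x * k⌋ : ℝ) / k - x| ≤ 1 / k := by
  have h1 : (⌊x * k⌋ : ℝ) ≤ x * k := Int.floor_le _
  have h2 : x * k - 1 < (⌊x * k⌋ : ℝ) := by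
    have := Int.lt_floor_add_one (x * k)
    linarith
  have e : (⌊x * k⌋ : ℝ) / k - x = ((⌊x * k⌋ : ℝ) - x * k) / k := by
    field_simp
  rw [e, abs_div, abs_of_pos hk]
  gcongr
  rw [abs_le]
  constructor <;> linarith

lemma gridFun_dist (m : ℕ) (z : ℂ) : ‖gridFun m z - z‖ ≤ 2 / (m + 1) := by
  have hk : (0 : ℝ) < (m : ℝ) + 1 := by positivity
  have key : ∀ a b : ℝ, (((a : ℂ) + (b : ℂ) * Complex.I) - z).re = a - z.re ∧
      (((a : ℂ) + (b : ℂ) * Complex.I) - z).im = b - z.im := by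
    intro a b
    constructor <;> simp
  have hre : (gridFun m z - z).re = (⌊z.re * (m + 1)⌋ : ℝ) / (m + 1) - z.re :=
    (key _ _).1
  have him : (gridFun m z - z).im = (⌊z.im * (m + 1)⌋ : ℝ) / (m + 1) - z.im :=
    (key _ _).2
  calc ‖gridFun m z - z‖ ≤ |(gridFun m z - z).re| + |(gridFun m z - z).im| :=
        Complex.norm_le_abs_re_add_abs_im _
  _ ≤ 1 / ((m : ℝ) + 1) + 1 / ((m : ℝ) + 1) := by
      rw [hre, him]
      exact add_le_add (floor_div_approx _ hk _) (floor_div_approx _ hk _)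
  _ = 2 / ((m : ℝ) + 1) := by ring

lemma gridFun_mem_grid (m : ℕ) {C : ℝ} {z : ℂ} (hz : ‖z‖ ≤ C) :
    gridFun m z ∈ (Finset.image
      (fun p : ℤ × ℤ => (((p.1 : ℝ) / (m + 1) : ℝ) : ℂ) + (((p.2 : ℝ) / (m + 1) : ℝ) : ℂ) * Complex.I)
      ((Finset.Icc (-⌈C * (m + 1)⌉) ⌈C * (m + 1)⌉) ×ˢ
        (Finset.Icc (-⌈C * (m + 1)⌉) ⌈C * (m + 1)⌉)) : Finset ℂ) := by
  have hk : (0 : ℝ) < (m : ℝ) + 1 := by positivity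
  apply Finset.mem_image.2
  refine ⟨(⌊z.re * (m + 1)⌋, ⌊z.im * (m + 1)⌋), ?_, rfl⟩
  have hb : ∀ x : ℝ, |x| ≤ C →
      ⌊x * ((m : ℝ) + 1)⌋ ∈ Finset.Icc (-⌈C * ((m : ℝ) + 1)⌉) ⌈C * ((m : ℝ) + 1)⌉ := by
    intro x hx
    rw [abs_le] at hx
    rw [Finset.mem_Icc]
    constructor
    · rw [Int.le_floor]
      push_cast
      have h1 : C * ((m : ℝ) + 1) ≤ (⌈C * ((m : ℝ) + 1)⌉ : ℝ) := Int.le_ceil _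
      nlinarith [hx.1]
    · calc ⌊x * ((m : ℝ) + 1)⌋ ≤ ⌊C * ((m : ℝ) + 1)⌋ :=
            Int.floor_le_floor (by nlinarith [hx.2])
      _ ≤ ⌈C * ((m : ℝ) + 1)⌉ := Int.floor_le_ceil _
  have habsz : ‖z‖ ≤ C := by
    exact hz
  rw [Finset.mem_product]
  exact ⟨hb z.re ((Complex.abs_re_le_norm z).trans habsz),
    hb z.im ((Complex.abs_im_le_norm z).trans habsz)⟩

end Approx

section ApproxSF
open Filter MeasureTheory

/-- uniform simple-function approximation of a bounded measurable function -/
def approxSF {X : Type*} [MeasurableSpace X] (Φ : X → ℂ) (hΦ : Measurable Φ)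
    {C : ℝ} (hC : ∀ p, ‖Φ p‖ ≤ C) (m : ℕ) : MeasureTheory.SimpleFunc X ℂ where
  toFun := fun p => gridFun m (Φ p)
  measurableSet_fiber' := fun x => ((gridFun_measurable m).comp hΦ) (measurableSet_singleton x)
  finite_range' := by
    apply Set.Finite.subset (Finset.image
      (fun p : ℤ × ℤ => (((p.1 : ℝ) / (m + 1) : ℝ) : ℂ) + (((p.2 : ℝ) / (m + 1) : ℝ) : ℂ) * Complex.I)
      ((Finset.Icc (-⌈C * (m + 1)⌉) ⌈C * (m + 1)⌉) ×ˢ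
        (Finset.Icc (-⌈C * (m + 1)⌉) ⌈C * (m + 1)⌉))).finite_toSet
    rintro y ⟨p, rfl⟩
    exact gridFun_mem_grid m (hC p)

lemma approxSF_apply {X : Type*} [MeasurableSpace X] (Φ : X → ℂ) (hΦ : Measurable Φ)
    {C : ℝ} (hC : ∀ p, ‖Φ p‖ ≤ C) (m : ℕ) (p : X) :
    approxSF Φ hΦ hC m p = gridFun m (Φ p) := rfl

lemma two_div_tendsto : Tendsto (fun n : ℕ => 2 / ((n : ℝ) + 1)) atTop (𝓝 0) := by
  have h := tendsto_one_div_add_atTop_nhds_zero_nat.const_mul (2 : ℝ)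
  simpa [mul_one_div, div_eq_mul_inv] using h

lemma approxSF_tendstoUniformly {X : Type*} [MeasurableSpace X] (Φ : X → ℂ)
    (hΦ : Measurable Φ) {C : ℝ} (hC : ∀ p, ‖Φ p‖ ≤ C) :
    TendstoUniformly (fun m p => approxSF Φ hΦ hC m p) Φ atTop := by
  rw [Metric.tendstoUniformly_iff]
  intro ε hε
  have h2 := two_div_tendsto.eventually (gt_mem_nhds hε)
  filter_upwards [h2] with n hn p
  rw [dist_comm, dist_eq_norm]
  calc ‖approxSF Φ hΦ hC n p - Φ p‖ = ‖gridFun n (Φ p) - Φ p‖ := rfl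
  _ ≤ 2 / ((n : ℝ) + 1) := gridFun_dist n (Φ p)
  _ < ε := hn

end ApproxSF


theorem statement5aux {ι X₁ X₂ : Type*} [MeasurableSpace X₁] [MeasurableSpace X₂]
    {H₁ H₂ : Type*}
    [NormedAddCommGroup H₁] [InnerProductSpace ℂ H₁] [CompleteSpace H₁]
    [NormedAddCommGroup H₂] [InnerProductSpace ℂ H₂] [CompleteSpace H₂]
    (e : HilbertBasis ι ℂ H₂)
    (Φ : X₁ × X₂ → ℂ) (hΦm : Measurable Φ) (C : ℝ) (hΦb : ∀ p, ‖Φ p‖ ≤ C)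
    (Q : H₂ →L[ℂ] H₁) (hQ : hsNorm2 e Q ≠ ⊤)
    {ℰ₁ : Set X₁ → H₁ →L[ℂ] H₁} {ℰ₂ : Set X₂ → H₂ →L[ℂ] H₂}
    {F : Set (X₁ × X₂) → (H₂ →L[ℂ] H₁) → (H₂ →L[ℂ] H₁)}
    (hF : IsProductSSM e ℰ₁ ℰ₂ F)
    (A : H₂ →L[ℂ] H₁)
    (hlim : ∀ s : ℕ → MeasureTheory.SimpleFunc (X₁ × X₂) ℂ,
      TendstoUniformly (fun n p => s n p) Φ Filter.atTop →
      Filter.Tendsto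
        (fun n => hsNorm2 e
          ((∑ z ∈ (s n).range, z • F ((s n : X₁ × X₂ → ℂ) ⁻¹' {z}) Q) - A))
        Filter.atTop (nhds 0)) :
    hsNorm2 e A ≤ (⨆ p : X₁ × X₂, (‖Φ p‖₊ : ℝ≥0∞)) ^ 2 * hsNorm2 e Q := by
  classical
  set M : ℝ≥0∞ := ⨆ p : X₁ × X₂, (‖Φ p‖₊ : ℝ≥0∞) with hM
  set q : ℝ≥0∞ := hsNorm2 e Q with hq
  have hQs : Summable (fun i => ‖Q (e i)‖ ^ 2) := (hs_ne_top_iff e Q).1 hQ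
  have hMtop : M ≠ ⊤ := by
    refine ne_top_of_le_ne_top (by simp : ((C.toNNReal : ℝ≥0∞)) ≠ ⊤) (iSup_le fun p => ?_)
    rw [← norm_toNNReal]
    exact_mod_cast Real.toNNReal_mono (hΦb p)
  -- the approximating simple functions
  set s : ℕ → MeasureTheory.SimpleFunc (X₁ × X₂) ℂ := fun n => approxSF Φ hΦm hΦb n with hs
  have huc : TendstoUniformly (fun n p => s n p) Φ Filter.atTop :=
    approxSF_tendstoUniformly Φ hΦm hΦb
  set S : ℕ → H₂ →L[ℂ] H₁ :=
    fun n => ∑ z ∈ (s n).range, z • F ((s n : X₁ × X₂ → ℂ) ⁻¹' {z}) Q with hSdef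
  have hδ : Filter.Tendsto (fun n => hsNorm2 e (S n - A)) Filter.atTop (nhds 0) := hlim s huc
  set η : ℕ → ℝ≥0∞ := fun n => ENNReal.ofReal (2 / ((n : ℝ) + 1)) with hηdef
  have hη : Filter.Tendsto η Filter.atTop (nhds 0) := by
    have := ENNReal.tendsto_ofReal (a := (0 : ℝ)) two_div_tendsto
    simpa using this
  -- bound on the simple integrals
  have hSn : ∀ n, hsNorm2 e (S n) ≤ (M + η n) ^ 2 * q := by
    intro n
    have h2pos : (0 : ℝ) ≤ 2 / ((n : ℝ) + 1) := by positivity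
    have hB0 : (0 : ℝ) ≤ M.toReal + 2 / ((n : ℝ) + 1) := by positivity
    have hB : ∀ z ∈ (s n).range, ‖z‖ ≤ M.toReal + 2 / ((n : ℝ) + 1) := by
      intro z hz
      obtain ⟨p, hp⟩ := MeasureTheory.SimpleFunc.mem_range.1 hz
      have hzval : z = gridFun n (Φ p) := hp.symm
      have h3 : ‖gridFun n (Φ p)‖ ≤ ‖Φ p‖ + 2 / ((n : ℝ) + 1) := by
        calc ‖gridFun n (Φ p)‖ = ‖(gridFun n (Φ p) - Φ p) + Φ p‖ := by ring_nf
        _ ≤ ‖gridFun n (Φ p) - Φ p‖ + ‖Φ p‖ := norm_add_le _ _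
        _ ≤ 2 / ((n : ℝ) + 1) + ‖Φ p‖ := by
            have := gridFun_dist n (Φ p)
            linarith
        _ = ‖Φ p‖ + 2 / ((n : ℝ) + 1) := by ring
      have h4 : ‖Φ p‖ ≤ M.toReal := by
        have h5 : ((‖Φ p‖₊ : ℝ≥0∞)) ≤ M := le_iSup (fun p => ((‖Φ p‖₊ : ℝ≥0∞))) p
        have h6 := ENNReal.toReal_mono hMtop h5
        simpa using h6
      rw [hzval]
      linarith
    have hbound := F_sum_bound hF (s n) hQs hB0 hB
    have hco : ENNReal.ofReal ((M.toReal + 2 / ((n : ℝ) + 1)) ^ 2) = (M + η n) ^ 2 := by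
      rw [ENNReal.ofReal_pow hB0, ENNReal.ofReal_add ENNReal.toReal_nonneg h2pos,
        ENNReal.ofReal_toReal hMtop]
    rw [hco] at hbound
    exact hbound
  -- master inequality
  have master : ∀ ε : ℝ≥0, 0 < ε → ∀ n, hsNorm2 e A
      ≤ (1 + (ε : ℝ≥0∞)) * ((M + η n) ^ 2 * q)
        + (1 + (ε : ℝ≥0∞)⁻¹) * hsNorm2 e (S n - A) := by
    intro ε hε n
    have hAeq : A = S n + (A - S n) := by abel
    have h1 : hsNorm2 e A ≤ (1 + (ε : ℝ≥0∞)) * hsNorm2 e (S n)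
        + (1 + (ε : ℝ≥0∞)⁻¹) * hsNorm2 e (A - S n) := by
      conv_lhs => rw [hAeq]
      exact hs_triangle_eps e ε hε (S n) (A - S n)
    have h2 : hsNorm2 e (A - S n) = hsNorm2 e (S n - A) := by
      rw [← hsNorm2_neg e (A - S n), neg_sub]
    rw [h2] at h1
    refine h1.trans ?_
    gcongr
    exact hSn n
  -- pass to the limit in n for fixed ε
  have step1 : ∀ ε : ℝ≥0, 0 < ε → hsNorm2 e A ≤ (1 + (ε : ℝ≥0∞)) * (M ^ 2 * q) := by
    intro ε hε
    have hconst_ne : (1 + (ε : ℝ≥0∞)⁻¹) ≠ ⊤ := by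
      apply ENNReal.add_ne_top.2
      exact ⟨ENNReal.one_ne_top, ENNReal.inv_ne_top.2 (by exact_mod_cast ne_of_gt hε)⟩
    have t1 : Filter.Tendsto (fun n => M + η n) Filter.atTop (nhds M) := by
      have := Filter.Tendsto.add (tendsto_const_nhds (x := M) (f := Filter.atTop)) hη
      simpa using this
    have t2 : Filter.Tendsto (fun n => (M + η n) ^ 2) Filter.atTop (nhds (M ^ 2)) :=
      ENNReal.Tendsto.pow t1
    have t3 : Filter.Tendsto (fun n => (M + η n) ^ 2 * q) Filter.atTop (nhds (M ^ 2 * q)) :=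
      ENNReal.Tendsto.mul_const t2 (Or.inr hQ)
    have t4 : Filter.Tendsto (fun n => (1 + (ε : ℝ≥0∞)) * ((M + η n) ^ 2 * q))
        Filter.atTop (nhds ((1 + (ε : ℝ≥0∞)) * (M ^ 2 * q))) :=
      ENNReal.Tendsto.const_mul t3 (Or.inr (by
        apply ENNReal.add_ne_top.2
        exact ⟨ENNReal.one_ne_top, ENNReal.coe_ne_top⟩))
    have t5 : Filter.Tendsto (fun n => (1 + (ε : ℝ≥0∞)⁻¹) * hsNorm2 e (S n - A))
        Filter.atTop (nhds 0) := by
      have := ENNReal.Tendsto.const_mul hδ (Or.inr hconst_ne)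
      simpa using this
    have t6 := t4.add t5
    rw [add_zero] at t6
    exact ge_of_tendsto' t6 (fun n => master ε hε n) |>.trans_eq rfl
  -- let ε → 0
  have hfin : M ^ 2 * q < ⊤ := by
    apply ENNReal.mul_lt_top
    · exact ENNReal.pow_lt_top hMtop.lt_top
    · exact hQ.lt_top
  apply ENNReal.le_of_forall_pos_le_add
  intro ρ hρ _
  by_cases hz : M ^ 2 * q = 0
  · have := step1 1 one_pos
    rw [hz, mul_zero] at this
    exact this.trans (by simp)
  · set c : ℝ≥0 := (M ^ 2 * q).toNNReal with hc
    have hc0 : c ≠ 0 := by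
      simp only [hc, ne_eq, ENNReal.toNNReal_eq_zero_iff]
      push_neg
      exact ⟨hz, hfin.ne⟩
    have hcoe : ((c : ℝ≥0∞)) = M ^ 2 * q := ENNReal.coe_toNNReal hfin.ne
    have hεpos : 0 < ρ / c := by
      apply div_pos hρ
      exact pos_iff_ne_zero.2 hc0
    have := step1 (ρ / c) hεpos
    calc hsNorm2 e A ≤ (1 + ((ρ / c : ℝ≥0) : ℝ≥0∞)) * (M ^ 2 * q) := this
    _ = M ^ 2 * q + ((ρ / c : ℝ≥0) : ℝ≥0∞) * (M ^ 2 * q) := by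
        rw [add_mul, one_mul]
    _ = M ^ 2 * q + ρ := by
        rw [← hcoe, ← ENNReal.coe_mul, div_mul_cancel₀ _ hc0]


/-- The double operator integral with respect to semi-spectral measures
of a Hilbert–Schmidt operator satisfies
`‖∬ Φ dℰ₁ Q dℰ₂‖_{S₂} ≤ sup |Φ| ⬝ ‖Q‖_{S₂}` (stated with squared `S₂`-norms). -/
theorem statement5 {ι X₁ X₂ : Type*} [MeasurableSpace X₁] [MeasurableSpace X₂]
    {H₁ H₂ : Type*}
    [NormedAddCommGroup H₁] [InnerProductSpace ℂ H₁] [CompleteSpace H₁]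
    [NormedAddCommGroup H₂] [InnerProductSpace ℂ H₂] [CompleteSpace H₂]
    (e : HilbertBasis ι ℂ H₂)
    (ℰ₁ : Set X₁ → H₁ →L[ℂ] H₁) (hℰ₁ : IsSemiSpectralMeasure ℰ₁)
    (ℰ₂ : Set X₂ → H₂ →L[ℂ] H₂) (hℰ₂ : IsSemiSpectralMeasure ℰ₂)
    (Φ : X₁ × X₂ → ℂ) (hΦm : Measurable Φ) (C : ℝ) (hΦb : ∀ p, ‖Φ p‖ ≤ C)
    (Q : H₂ →L[ℂ] H₁) (hQ : hsNorm2 e Q ≠ ⊤)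
    (A : H₂ →L[ℂ] H₁) (hA : IsDOI e ℰ₁ ℰ₂ Φ Q A) :
    hsNorm2 e A ≤ (⨆ p : X₁ × X₂, (‖Φ p‖₊ : ℝ≥0∞)) ^ 2 * hsNorm2 e Q := by
  obtain ⟨F, hF, hlim⟩ := hA
  exact statement5aux e Φ hΦm C hΦb Q hQ hF A hlim

end
end
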